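/- arXiv:1310.1857 — 2 statements merged into one kernel-verified Lean document; each statement's English description precedes it below -/
import Mathlib

section
/- If the step size satisfies h ≤ c/P(Q_τ(|x_0| + ‖u‖) + ‖u‖), then the Euler iterates satisfy W(t_0+ih, x_i) ≤ exp(2cih)·W(t_0, x_0) + ∫_{t_0}^{t_0+ih} exp(2c(t_0+ih − s))·p(|u(s)|) ds for all i = 0, …, N. -/
open Set Filter MeasureTheory intervalIntegral
open InnerProductSpace Topology

noncomputable section

local notation "E" n => EuclideanSpace ℝ (Fin n)


def Psi (n : ℕ) : ((ℝ × (E n)) →L[ℝ] ℝ) →L[ℝ] (E n) :=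
  ((toDual ℝ (E n)).symm.toContinuousLinearEquiv.toContinuousLinearMap).comp
    ((ContinuousLinearMap.compL ℝ (E n) (ℝ × (E n)) ℝ).flip (ContinuousLinearMap.inr ℝ ℝ (E n)))

lemma inner_Psi {n : ℕ} (φ : (ℝ × (E n)) →L[ℝ] ℝ) (z : E n) :
    (inner ℝ (Psi n φ) z : ℝ) = φ (0, z) := by
  show (inner ℝ ((toDual ℝ (E n)).symm (φ.comp (ContinuousLinearMap.inr ℝ ℝ (E n)))) z : ℝ) = _
  rw [toDual_symm_apply]; simp

lemma aux_D2 {n : ℕ} {W : ℝ → (E n) → ℝ}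
    (hWC2 : ContDiffOn ℝ 2 (fun q : ℝ × (E n) => W q.1 q.2) (Ici 0 ×ˢ univ))
    (q0 v : ℝ × (E n)) (θ0 : ℝ) (hpos : 0 < (q0 + θ0 • v).1) :
    ∃ d : ℝ, HasDerivAt (fun θ : ℝ =>
        (fderivWithin ℝ (fun q : ℝ × (E n) => W q.1 q.2) (Ici 0 ×ˢ univ) (q0 + θ • v)) v) d θ0 ∧
      d ≤ v.1 ^ 2 * |derivWithin (fun s' => derivWithin (fun s'' => W s'' (q0 + θ0 • v).2) (Ici 0) s')
            (Ici 0) (q0 + θ0 • v).1|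
        + 2 * |v.1| * ‖v.2‖ * ‖derivWithin (fun s' => gradient (fun y => W s' y) (q0 + θ0 • v).2)
            (Ici 0) (q0 + θ0 • v).1‖
        + ‖v.2‖ ^ 2 * ‖fderiv ℝ (fun y => gradient (fun y' => W (q0 + θ0 • v).1 y') y) (q0 + θ0 • v).2‖ := by
  set Wt : ℝ × (E n) → ℝ := fun q => W q.1 q.2 with hWt
  set S : Set (ℝ × (E n)) := Ici 0 ×ˢ univ with hS
  set q : ℝ × (E n) := q0 + θ0 • v with hq
  set inr : (E n) →L[ℝ] ℝ × (E n) := ContinuousLinearMap.inr ℝ ℝ (E n) with hinr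
  have hSnhds : ∀ r : ℝ × (E n), 0 < r.1 → S ∈ 𝓝 r := fun r hr =>
    prod_mem_nhds (Ici_mem_nhds hr) univ_mem
  have hC2at : ∀ r : ℝ × (E n), 0 < r.1 → ContDiffAt ℝ 2 Wt r := fun r hr =>
    hWC2.contDiffAt (hSnhds r hr)
  have hdiffat : ∀ r : ℝ × (E n), 0 < r.1 → DifferentiableAt ℝ Wt r := fun r hr =>
    (hC2at r hr).differentiableAt two_ne_zero
  have hD2' : ContDiffAt ℝ 1 (fderiv ℝ Wt) q := (hC2at _ hpos).fderiv_right (le_refl 2)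
  set D2 : (ℝ × (E n)) →L[ℝ] (ℝ × (E n)) →L[ℝ] ℝ := fderiv ℝ (fderiv ℝ Wt) q with hD2def
  have hD2 : HasFDerivAt (fderiv ℝ Wt) D2 q := (hD2'.differentiableAt one_ne_zero).hasFDerivAt
  have hD2p : HasFDerivAt (fderiv ℝ Wt) D2 (q.1, q.2) := by rwa [Prod.mk.eta]
  have hopen : ∀ᶠ r : ℝ × (E n) in 𝓝 q, 0 < r.1 :=
    (isOpen_lt continuous_const continuous_fst).mem_nhds hpos
  have hsymm : ∀ a b, D2 a b = D2 b a := fun a b =>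
    second_derivative_symmetric_of_eventually
      (by filter_upwards [hopen] with r hr using (hdiffat r hr).hasFDerivAt) hD2 a b
  have hDW : ∀ r : ℝ × (E n), 0 < r.1 → fderivWithin ℝ Wt S r = fderiv ℝ Wt r := fun r hr =>
    fderivWithin_of_mem_nhds (hSnhds r hr)
  -- derivative of θ ↦ D(γ θ) v
  have hline : HasDerivAt (fun θ : ℝ => q0 + θ • v) v θ0 := by
    simpa using ((hasDerivAt_id θ0).smul_const v).const_add q0
  have hlinemem : ∀ᶠ θ in 𝓝 θ0, 0 < (q0 + θ • v).1 := by
    have hcont : Continuous (fun θ : ℝ => (q0 + θ • v).1) :=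
      continuous_fst.comp (continuous_const.add (continuous_id.smul continuous_const))
    have ht : Tendsto (fun θ : ℝ => (q0 + θ • v).1) (𝓝 θ0) (𝓝 q.1) := hcont.tendsto θ0
    exact ht.eventually (eventually_gt_nhds hpos)
  have hG'd : HasDerivAt (fun θ => fderiv ℝ Wt (q0 + θ • v)) (D2 v) θ0 :=
    hD2.comp_hasDerivAt θ0 hline
  have hG'dv : HasDerivAt (fun θ => fderiv ℝ Wt (q0 + θ • v) v) (D2 v v) θ0 := by
    simpa using hG'd.clm_apply (hasDerivAt_const θ0 v)
  have hG'dvW : HasDerivAt (fun θ => fderivWithin ℝ Wt S (q0 + θ • v) v) (D2 v v) θ0 := by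
    refine hG'dv.congr_of_eventuallyEq ?_
    filter_upwards [hlinemem] with θ hθ
    rw [hDW _ hθ]
  refine ⟨D2 v v, hG'dvW, ?_⟩
  -- slice derivative identities
  have hlineT : ∀ s' : ℝ, HasDerivAt (fun s'' : ℝ => ((s'', q.2) : ℝ × (E n))) (1, 0) s' :=
    fun s' => (hasDerivAt_id' s').prodMk (hasDerivAt_const s' q.2)
  have hslice : ∀ s' : ℝ, 0 < s' →
      derivWithin (fun s'' => W s'' q.2) (Ici 0) s' = fderiv ℝ Wt (s', q.2) (1, 0) := by
    intro s' hs'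
    have hd : HasDerivAt (fun s'' => W s'' q.2) (fderiv ℝ Wt (s', q.2) (1, 0)) s' :=
      by have := (hdiffat (s', q.2) hs').hasFDerivAt.comp_hasDerivAt s' (hlineT s'); exact this
    rw [derivWithin_of_mem_nhds (Ici_mem_nhds hs'), hd.deriv]
  have h1 : HasDerivAt (fun s' : ℝ => fderiv ℝ Wt (s', q.2)) (D2 (1, 0)) q.1 :=
    hD2p.comp_hasDerivAt q.1 (hlineT q.1)
  -- (A) the ∂ₜₜ term
  have hA : derivWithin (fun s' => derivWithin (fun s'' => W s'' q.2) (Ici 0) s') (Ici 0) q.1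
      = D2 (1, 0) (1, 0) := by
    rw [derivWithin_of_mem_nhds (Ici_mem_nhds hpos)]
    have hev : (fun s' => derivWithin (fun s'' => W s'' q.2) (Ici 0) s')
        =ᶠ[𝓝 q.1] (fun s' => fderiv ℝ Wt (s', q.2) (1, 0)) := by
      filter_upwards [eventually_gt_nhds hpos] with s' hs' using hslice s' hs'
    rw [hev.deriv_eq]
    have := h1.clm_apply (hasDerivAt_const q.1 ((1 : ℝ), (0 : E n)))
    simpa using this.deriv
  -- gradient identity
  have hgrad : ∀ s' : ℝ, 0 < s' → ∀ y : E n,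
      gradient (fun y' => W s' y') y = Psi n (fderiv ℝ Wt (s', y)) := by
    intro s' hs' y
    have hincl : HasFDerivAt (fun y' : E n => ((s', y') : ℝ × (E n))) inr y :=
      hasFDerivAt_prodMk_right s' y
    have hcomp : HasFDerivAt (fun y' => W s' y')
        ((fderiv ℝ Wt (s', y)).comp inr) y :=
      (hdiffat (s', y) hs').hasFDerivAt.comp y hincl
    show gradient (fun y' => Wt (s', y')) y = _
    unfold gradient
    rw [hcomp.fderiv]
    rfl
  -- (B) the ∂ₜ∇ term
  have hGt : derivWithin (fun s' => gradient (fun y => W s' y) q.2) (Ici 0) q.1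
      = Psi n (D2 (1, 0)) := by
    rw [derivWithin_of_mem_nhds (Ici_mem_nhds hpos)]
    have hev : (fun s' => gradient (fun y => W s' y) q.2)
        =ᶠ[𝓝 q.1] (fun s' => Psi n (fderiv ℝ Wt (s', q.2))) := by
      filter_upwards [eventually_gt_nhds hpos] with s' hs' using hgrad s' hs' q.2
    rw [hev.deriv_eq]
    exact ((Psi n).hasFDerivAt.comp_hasDerivAt q.1 h1).deriv
  -- (C) the ∇² term
  have hHm : fderiv ℝ (fun y => gradient (fun y' => W q.1 y') y) q.2
      = (Psi n).comp (D2.comp inr) := by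
    have hfun : (fun y => gradient (fun y' => W q.1 y') y)
        = fun y => Psi n (fderiv ℝ Wt (q.1, y)) := funext (hgrad q.1 hpos)
    rw [hfun]
    have h2 : HasFDerivAt (fun y : E n => fderiv ℝ Wt (q.1, y)) (D2.comp inr) q.2 :=
      hD2p.comp q.2 (hasFDerivAt_prodMk_right q.1 q.2)
    exact ((Psi n).hasFDerivAt.comp q.2 h2).fderiv
  -- assembling the bound
  set A := derivWithin (fun s' => derivWithin (fun s'' => W s'' q.2) (Ici 0) s') (Ici 0) q.1
  set Gt := derivWithin (fun s' => gradient (fun y => W s' y) q.2) (Ici 0) q.1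
  set Hm := fderiv ℝ (fun y => gradient (fun y' => W q.1 y') y) q.2
  have hBcross : |D2 (1, 0) (0, v.2)| ≤ ‖Gt‖ * ‖v.2‖ := by
    have : (inner ℝ (Psi n (D2 (1, 0))) v.2 : ℝ) = D2 (1, 0) (0, v.2) := inner_Psi _ _
    rw [← this, hGt]
    exact abs_real_inner_le_norm _ _
  have hCbound : |D2 (0, v.2) (0, v.2)| ≤ ‖Hm‖ * ‖v.2‖ ^ 2 := by
    have h3 : ((Psi n).comp (D2.comp inr)) v.2 = Psi n (D2 (0, v.2)) := rfl
    have h4 : (inner ℝ (Psi n (D2 (0, v.2))) v.2 : ℝ) = D2 (0, v.2) (0, v.2) := inner_Psi _ _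
    calc |D2 (0, v.2) (0, v.2)| = |(inner ℝ (Hm v.2) v.2 : ℝ)| := by rw [hHm, h3, h4]
      _ ≤ ‖Hm v.2‖ * ‖v.2‖ := abs_real_inner_le_norm _ _
      _ ≤ ‖Hm‖ * ‖v.2‖ * ‖v.2‖ := by
          exact mul_le_mul_of_nonneg_right (Hm.le_opNorm v.2) (norm_nonneg _)
      _ = ‖Hm‖ * ‖v.2‖ ^ 2 := by ring
  have hvdec : v = v.1 • ((1 : ℝ), (0 : E n)) + ((0 : ℝ), v.2) := by
    ext <;> simp
  have hexp : D2 v v = v.1 * (v.1 * D2 (1, 0) (1, 0)) + v.1 * D2 (1, 0) (0, v.2)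
      + (v.1 * D2 (0, v.2) (1, 0) + D2 (0, v.2) (0, v.2)) := by
    conv_lhs => rw [hvdec]
    simp only [ContinuousLinearMap.map_add, ContinuousLinearMap.map_smul,
      ContinuousLinearMap.add_apply, ContinuousLinearMap.coe_smul', Pi.smul_apply, smul_eq_mul]
  rw [hexp, ← hA]
  have e1 : v.1 * (v.1 * A) ≤ v.1 ^ 2 * |A| := by
    have : v.1 * (v.1 * A) = v.1 ^ 2 * A := by ring
    rw [this]
    exact mul_le_mul_of_nonneg_left (le_abs_self _) (sq_nonneg _)
  have e2 : v.1 * D2 (1, 0) (0, v.2) ≤ |v.1| * (‖Gt‖ * ‖v.2‖) := by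
    calc v.1 * D2 (1, 0) (0, v.2) ≤ |v.1 * D2 (1, 0) (0, v.2)| := le_abs_self _
      _ = |v.1| * |D2 (1, 0) (0, v.2)| := abs_mul _ _
      _ ≤ |v.1| * (‖Gt‖ * ‖v.2‖) := mul_le_mul_of_nonneg_left hBcross (abs_nonneg _)
  have e3 : v.1 * D2 (0, v.2) (1, 0) ≤ |v.1| * (‖Gt‖ * ‖v.2‖) := by
    rw [hsymm]; exact e2
  have e4 : D2 (0, v.2) (0, v.2) ≤ ‖Hm‖ * ‖v.2‖ ^ 2 := le_trans (le_abs_self _) hCbound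
  have := add_le_add (add_le_add e1 e2) (add_le_add e3 e4)
  calc v.1 * (v.1 * A) + v.1 * D2 (1, 0) (0, v.2)
        + (v.1 * D2 (0, v.2) (1, 0) + D2 (0, v.2) (0, v.2))
      ≤ v.1 ^ 2 * |A| + |v.1| * (‖Gt‖ * ‖v.2‖) + (|v.1| * (‖Gt‖ * ‖v.2‖) + ‖Hm‖ * ‖v.2‖ ^ 2) := this
    _ = v.1 ^ 2 * |A| + 2 * |v.1| * ‖v.2‖ * ‖Gt‖ + ‖v.2‖ ^ 2 * ‖Hm‖ := by ring

lemma aux_taylor {G G' : ℝ → ℝ} {K : ℝ}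
    (hG' : ∀ θ ∈ Icc (0:ℝ) 1, HasDerivWithinAt G (G' θ) (Icc 0 1) θ)
    (hG'c : ContinuousOn G' (Icc 0 1))
    (hG'' : ∀ θ ∈ Ioo (0:ℝ) 1, ∃ d, HasDerivAt G' d θ ∧ d ≤ K) :
    G 1 ≤ G 0 + G' 0 + K / 2 := by
  have hGc : ContinuousOn G (Icc 0 1) := fun θ hθ => (hG' θ hθ).continuousWithinAt
  have h1 : ∀ θ ∈ Icc (0:ℝ) 1, G' θ ≤ G' 0 + K * θ := by
    have hA : AntitoneOn (fun θ => G' θ - K * θ) (Icc 0 1) := by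
      apply antitoneOn_of_deriv_nonpos (convex_Icc 0 1)
      · exact hG'c.sub (continuous_const.mul continuous_id).continuousOn
      · rw [interior_Icc]; intro θ hθ
        obtain ⟨d, hd, _⟩ := hG'' θ hθ
        exact (hd.sub ((hasDerivAt_id' θ).const_mul K)).differentiableAt.differentiableWithinAt
      · rw [interior_Icc]; intro θ hθ
        obtain ⟨d, hd, hdK⟩ := hG'' θ hθ
        have hder : HasDerivAt (fun θ => G' θ - K * θ) _ θ := hd.sub ((hasDerivAt_id' θ).const_mul K)
        rw [hder.deriv]
        simp; linarith
    intro θ hθ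
    have h0 : (0:ℝ) ∈ Icc (0:ℝ) 1 := by norm_num
    have := hA h0 hθ hθ.1
    simp only [mul_zero, sub_zero] at this
    linarith
  have hA2 : AntitoneOn (fun θ => G θ - θ * G' 0 - K * θ ^ 2 / 2) (Icc 0 1) := by
    apply antitoneOn_of_deriv_nonpos (convex_Icc 0 1)
    · exact (hGc.sub ((continuous_id.mul continuous_const).continuousOn)).sub
        (((continuous_const.mul (continuous_pow 2)).div_const 2).continuousOn)
    · rw [interior_Icc]; intro θ hθ
      have hG := (hG' θ (Ioo_subset_Icc_self hθ)).hasDerivAt (Icc_mem_nhds hθ.1 hθ.2)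
      exact ((hG.sub ((hasDerivAt_id' θ).mul_const (G' 0))).sub
        (((hasDerivAt_pow 2 θ).const_mul K).div_const 2)).differentiableAt.differentiableWithinAt
    · rw [interior_Icc]; intro θ hθ
      have hG := (hG' θ (Ioo_subset_Icc_self hθ)).hasDerivAt (Icc_mem_nhds hθ.1 hθ.2)
      have hder : HasDerivAt (fun θ => G θ - θ * G' 0 - K * θ ^ 2 / 2) _ θ :=
        ((hG.sub ((hasDerivAt_id' θ).mul_const (G' 0))).sub
        (((hasDerivAt_pow 2 θ).const_mul K).div_const 2))
      rw [hder.deriv]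
      have := h1 θ (Ioo_subset_Icc_self hθ)
      have hθ0 := hθ.1
      simp only [pow_one, mul_one, one_mul]
      ring_nf
      nlinarith
  have h0 : (0:ℝ) ∈ Icc (0:ℝ) 1 := by norm_num
  have h1' : (1:ℝ) ∈ Icc (0:ℝ) 1 := by norm_num
  have := hA2 h0 h1' zero_le_one
  simp at this
  linarith

lemma aux_II {g : ℝ → ℝ} {a b C : ℝ} (hab : a ≤ b)
    (hm : AEStronglyMeasurable g (volume.restrict (Ioc a b)))
    (hbd : ∀ᵐ s ∂(volume.restrict (Ioc a b)), |g s| ≤ C) : IntervalIntegrable g volume a b := by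
  rw [intervalIntegrable_iff_integrableOn_Ioc_of_le hab]
  refine Integrable.mono' (integrable_const C) hm ?_
  simpa [Real.norm_eq_abs] using hbd


lemma aux_IIv {n : ℕ} {g : ℝ → EuclideanSpace ℝ (Fin n)} {a b C : ℝ} (hab : a ≤ b)
    (hm : AEStronglyMeasurable g (volume.restrict (Ioc a b)))
    (hbd : ∀ᵐ s ∂(volume.restrict (Ioc a b)), ‖g s‖ ≤ C) : IntervalIntegrable g volume a b := by
  rw [intervalIntegrable_iff_integrableOn_Ioc_of_le hab]
  exact Integrable.mono' (integrable_const C) hm hbd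

lemma aux_taylor_W {n : ℕ} {W : ℝ → (E n) → ℝ}
    (hWC2 : ContDiffOn ℝ 2 (fun q : ℝ × (E n) => W q.1 q.2) (Ici 0 ×ˢ univ))
    (t : ℝ) (ht : 0 ≤ t) (h : ℝ) (hh : 0 < h) (x Δ : E n) (K : ℝ)
    (hK : ∀ θ : ℝ, 0 < θ → θ < 1 →
      h ^ 2 * |derivWithin (fun s' => derivWithin (fun s'' => W s'' (x + θ • Δ)) (Ici 0) s')
          (Ici 0) (t + θ * h)|
        + 2 * h * ‖Δ‖ * ‖derivWithin (fun s' => gradient (fun y => W s' y) (x + θ • Δ))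
          (Ici 0) (t + θ * h)‖
        + ‖Δ‖ ^ 2 * ‖fderiv ℝ (fun y => gradient (fun y' => W (t + θ * h) y') y) (x + θ • Δ)‖ ≤ K) :
    W (t + h) (x + Δ) ≤ W t x + (h * derivWithin (fun s => W s x) (Ici 0) t
      + (inner ℝ (gradient (fun y => W t y) x) Δ : ℝ)) + K / 2 := by
  set Wt : ℝ × (E n) → ℝ := fun q => W q.1 q.2 with hWtdef
  set S : Set (ℝ × (E n)) := Ici 0 ×ˢ univ with hSdef
  set v : ℝ × (E n) := (h, Δ) with hvdef
  set q0 : ℝ × (E n) := (t, x) with hq0def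
  have hq1 : ∀ θ : ℝ, (q0 + θ • v).1 = t + θ * h := by intro θ; simp [hq0def, hvdef, smul_eq_mul]
  have hq2 : ∀ θ : ℝ, (q0 + θ • v).2 = x + θ • Δ := by intro θ; simp [hq0def, hvdef]
  have hmem : ∀ θ : ℝ, 0 ≤ θ → q0 + θ • v ∈ S := by
    intro θ hθ
    refine ⟨?_, mem_univ _⟩
    have : (0:ℝ) ≤ (q0 + θ • v).1 := by rw [hq1]; exact add_nonneg ht (mul_nonneg hθ hh.le)
    exact this
  have hSud : UniqueDiffOn ℝ S := (uniqueDiffOn_Ici 0).prod uniqueDiffOn_univ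
  have hWdiff : DifferentiableOn ℝ Wt S := hWC2.differentiableOn two_ne_zero
  set D : (ℝ × (E n)) → (ℝ × (E n)) →L[ℝ] ℝ := fderivWithin ℝ Wt S with hDdef
  have hD : ∀ r ∈ S, HasFDerivWithinAt Wt (D r) S r := fun r hr =>
    (hWdiff r hr).hasFDerivWithinAt
  have hDc : ContinuousOn D S := hWC2.continuousOn_fderivWithin hSud (by norm_num)
  set G : ℝ → ℝ := fun θ => Wt (q0 + θ • v) with hGdef
  set G' : ℝ → ℝ := fun θ => (D (q0 + θ • v)) v with hG'def
  have hline : ∀ θ : ℝ, HasDerivAt (fun θ' : ℝ => q0 + θ' • v) v θ := by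
    intro θ; simpa using ((hasDerivAt_id θ).smul_const v).const_add q0
  have hlinec : Continuous (fun θ' : ℝ => q0 + θ' • v) :=
    continuous_const.add (continuous_id.smul continuous_const)
  have hmapsTo : MapsTo (fun θ' : ℝ => q0 + θ' • v) (Icc 0 1) S := fun θ hθ => hmem θ hθ.1
  have hG' : ∀ θ ∈ Icc (0:ℝ) 1, HasDerivWithinAt G (G' θ) (Icc 0 1) θ := by
    intro θ hθ
    exact (hD _ (hmem θ hθ.1)).comp_hasDerivWithinAt θ ((hline θ).hasDerivWithinAt) hmapsTo
  have hG'c : ContinuousOn G' (Icc 0 1) := by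
    exact ((hDc.comp hlinec.continuousOn hmapsTo).clm_apply continuousOn_const)
  have hG'' : ∀ θ ∈ Ioo (0:ℝ) 1, ∃ d, HasDerivAt G' d θ ∧ d ≤ K := by
    intro θ hθ
    have hpos : 0 < (q0 + θ • v).1 := by rw [hq1]; nlinarith [hθ.1, hθ.2]
    obtain ⟨d, hd, hdle⟩ := aux_D2 hWC2 q0 v θ hpos
    refine ⟨d, hd, le_trans hdle ?_⟩
    rw [hq1, hq2]
    have habs : |v.1| = h := by rw [hvdef]; exact abs_of_pos hh
    calc v.1 ^ 2 * _ + 2 * |v.1| * ‖v.2‖ * _ + ‖v.2‖ ^ 2 * _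
        = h ^ 2 * |derivWithin (fun s' => derivWithin (fun s'' => W s'' (x + θ • Δ)) (Ici 0) s')
            (Ici 0) (t + θ * h)|
          + 2 * h * ‖Δ‖ * ‖derivWithin (fun s' => gradient (fun y => W s' y) (x + θ • Δ))
            (Ici 0) (t + θ * h)‖
          + ‖Δ‖ ^ 2 * ‖fderiv ℝ (fun y => gradient (fun y' => W (t + θ * h) y') y) (x + θ • Δ)‖ := by
            rw [habs]
      _ ≤ K := hK θ hθ.1 hθ.2
  have hmain := aux_taylor hG' hG'c hG''
  -- identify G 1, G 0, G' 0
  have hG1 : G 1 = W (t + h) (x + Δ) := by simp [hGdef, hWtdef, hq0def, hvdef]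
  have hG0 : G 0 = W t x := by simp [hGdef, hWtdef, hq0def, hvdef]
  have hq00 : q0 + (0:ℝ) • v = q0 := by simp
  -- decompose G' 0
  have hq0S : q0 ∈ S := by
    refine ⟨?_, mem_univ _⟩
    exact ht
  have hDt : (D q0) (1, 0) = derivWithin (fun s => W s x) (Ici 0) t := by
    have hlx : HasDerivWithinAt (fun s : ℝ => ((s, x) : ℝ × (E n))) (1, 0) (Ici 0) t :=
      ((hasDerivAt_id' t).prodMk (hasDerivAt_const t x)).hasDerivWithinAt
    have hmt : MapsTo (fun s : ℝ => ((s, x) : ℝ × (E n))) (Ici 0) S := fun s hs =>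
      ⟨hs, mem_univ _⟩
    have := (hD q0 hq0S).comp_hasDerivWithinAt t hlx hmt
    exact (this.derivWithin ((uniqueDiffOn_Ici 0) t ht)).symm
  have hgrad : ∀ z : E n, (inner ℝ (gradient (fun y => W t y) x) z : ℝ) = (D q0) (0, z) := by
    intro z
    have hincl : HasFDerivAt (fun y : E n => ((t, y) : ℝ × (E n)))
        (ContinuousLinearMap.inr ℝ ℝ (E n)) x := hasFDerivAt_prodMk_right t x
    have hcomp : HasFDerivWithinAt (fun y : E n => Wt (t, y))
        ((D q0).comp (ContinuousLinearMap.inr ℝ ℝ (E n))) univ x := by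
      exact (hD q0 hq0S).comp x hincl.hasFDerivWithinAt (fun y _ => ⟨ht, mem_univ _⟩)
    have hcomp' : HasFDerivAt (fun y : E n => W t y)
        ((D q0).comp (ContinuousLinearMap.inr ℝ ℝ (E n))) x := by
      rw [← hasFDerivWithinAt_univ]; exact hcomp
    show (inner ℝ ((toDual ℝ (E n)).symm (fderiv ℝ (fun y => W t y) x)) z : ℝ) = _
    rw [hcomp'.fderiv, toDual_symm_apply]
    rfl
  have hG'0 : G' 0 = h * derivWithin (fun s => W s x) (Ici 0) t
      + (inner ℝ (gradient (fun y => W t y) x) Δ : ℝ) := by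
    have hvadd : v = h • ((1 : ℝ), (0 : E n)) + ((0 : ℝ), Δ) := by
      rw [hvdef]; ext <;> simp
    have : G' 0 = (D q0) v := by rw [hG'def]; simp
    rw [this]
    conv_lhs => rw [hvadd]
    rw [ContinuousLinearMap.map_add, ContinuousLinearMap.map_smul]
    rw [hDt, hgrad Δ]
    simp [smul_eq_mul]
  rw [hG1, hG0, hG'0] at hmain
  exact hmain

end

set_option maxHeartbeats 2000000 in
theorem stmt_3
    {n m : ℕ}
    (f : ℝ → EuclideanSpace ℝ (Fin n) → EuclideanSpace ℝ (Fin m) → EuclideanSpace ℝ (Fin n))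
    (hfc : Continuous fun q : ℝ × EuclideanSpace ℝ (Fin n) × EuclideanSpace ℝ (Fin m) =>
      f q.1 q.2.1 q.2.2)
    (hf0 : ∀ t ≥ (0:ℝ), f t 0 0 = 0)
    (L : ℝ → ℝ) (hLc : Continuous L) (hLm : Monotone L) (hL1 : ∀ s, 1 ≤ L s)
    (hLip : ∀ t ≥ (0:ℝ), ∀ x y u, ‖f t x u - f t y u‖ ≤ L (‖x‖ + ‖y‖ + ‖u‖) * ‖x - y‖)
    (hgr : ∀ t ≥ (0:ℝ), ∀ x u, ‖f t x u‖ ≤ (‖x‖ + ‖u‖) * L (‖x‖ + ‖u‖))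
    (W : ℝ → EuclideanSpace ℝ (Fin n) → ℝ)
    (hWC2 : ContDiffOn ℝ 2 (fun q : ℝ × EuclideanSpace ℝ (Fin n) => W q.1 q.2) (Ici 0 ×ˢ univ))
    (hW1 : ∀ t ≥ (0:ℝ), ∀ x, 1 ≤ W t x)
    (c : ℝ) (hc : 0 < c)
    (p : ℝ → ℝ) (hpc : ContinuousOn p (Ici 0)) (hpm : StrictMonoOn p (Ici 0))
    (hp0 : p 0 = 0) (hptop : Tendsto p atTop atTop)
    (hdiss : ∀ t ≥ (0:ℝ), ∀ x u,
      derivWithin (fun s => W s x) (Ici 0) t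
        + (inner ℝ (gradient (fun y => W t y) x) (f t x u) : ℝ) ≤ c * W t x + p ‖u‖)
    (τ : ℝ) (hτ : 0 < τ)
    (P : ℝ → ℝ) (hPc : ContinuousOn P (Ici 0)) (hPm : MonotoneOn P (Ici 0))
    (hP1 : ∀ s ≥ (0:ℝ), ∀ t ≥ (0:ℝ), ∀ ξ : EuclideanSpace ℝ (Fin n),
      ‖ξ‖ ≤ s * (1 + τ * L s) →
      1 + |derivWithin (fun s' => derivWithin (fun s'' => W s'' ξ) (Ici 0) s') (Ici 0) t|
        + 2 * s * L s * ‖derivWithin (fun s' => gradient (fun y => W s' y) ξ) (Ici 0) t‖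
        + s ^ 2 * L s ^ 2 * ‖fderiv ℝ (fun y => gradient (fun y' => W t y') y) ξ‖ ≤ P s)
    (hP2 : ∀ t ≥ (0:ℝ), ∀ x, ‖gradient (fun y => W t y) x‖ ≤ Real.sqrt (P ‖x‖))
    (hP3 : ∀ t ≥ (0:ℝ), ∀ s ≥ t, ∀ x u,
      ‖f s x u - f t x u‖ ≤ (s - t) * Real.sqrt (P (‖x‖ + ‖u‖)))
    (Q : ℝ → ℝ → ℝ)
    (hQc : ∀ w ≥ (0:ℝ), ContinuousOn (Q w) (Ici 0))
    (hQm : ∀ w ≥ (0:ℝ), MonotoneOn (Q w) (Ici 0))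
    (hQ : ∀ w ≥ (0:ℝ), ∀ s ≥ (0:ℝ), ∀ x : EuclideanSpace ℝ (Fin n), ∀ h t : ℝ,
      h ∈ Icc 0 w → 0 ≤ t →
      W (t + h) x ≤ Real.exp (2 * c * w) * sSup ((fun y => W t y) '' {y | ‖y‖ ≤ s})
          + (2 * c)⁻¹ * Real.exp (2 * c * w) * p s →
      1 + ‖x‖ ≤ Q w s)
    (t0 : ℝ) (ht0 : 0 ≤ t0) (x0 : EuclideanSpace ℝ (Fin n))
    (u : ℝ → EuclideanSpace ℝ (Fin m)) (hum : Measurable u)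
    (uB : ℝ) (huB0 : 0 ≤ uB)
    (huB : ∀ᵐ t ∂(volume.restrict (Icc t0 (t0 + τ))), ‖u t‖ ≤ uB)
    (N : ℕ) (hN : 0 < N) (h : ℝ) (hh : h = τ / N)
    (xs : ℕ → EuclideanSpace ℝ (Fin n)) (hxs0 : xs 0 = x0)
    (hxs : ∀ i < N, xs (i + 1) = xs i +
      ∫ s in (t0 + (i : ℝ) * h)..(t0 + ((i : ℝ) + 1) * h), f s (xs i) (u s))
    (hstep : h ≤ c / P (Q τ (‖x0‖ + uB) + uB)) :
    ∀ i ≤ N, W (t0 + (i : ℝ) * h) (xs i)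
      ≤ Real.exp (2 * c * (i : ℝ) * h) * W t0 x0
        + ∫ s in t0..(t0 + (i : ℝ) * h), Real.exp (2 * c * (t0 + (i : ℝ) * h - s)) * p ‖u s‖ := by

  -- ===== global setup =====
  have hN1 : (1:ℝ) ≤ (N:ℝ) := by exact_mod_cast hN
  have hh0 : 0 < h := by
    rw [hh]; exact div_pos hτ (by exact_mod_cast hN)
  have hNh : (N:ℝ) * h = τ := by
    rw [hh]; field_simp
  have hhτ : h ≤ τ := by nlinarith only [hNh, hh0, hN1, hτ]
  set s0 : ℝ := ‖x0‖ + uB with hs0def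
  set ρ : ℝ := Q τ s0 with hρdef
  set sS : ℝ := ρ + uB with hsSdef
  set Ps : ℝ := P sS with hPsdef
  have hs00 : 0 ≤ s0 := add_nonneg (norm_nonneg _) huB0
  have hpmono : MonotoneOn p (Ici 0) := hpm.monotoneOn
  have hpnn : ∀ r : ℝ, 0 ≤ r → 0 ≤ p r := by
    intro r hr
    have := hpmono (mem_Ici.mpr le_rfl) (mem_Ici.mpr hr) hr
    rwa [hp0] at this
  -- sSup machinery
  have hballc : IsCompact {y : EuclideanSpace ℝ (Fin n) | ‖y‖ ≤ s0} := by
    have hbe : {y : EuclideanSpace ℝ (Fin n) | ‖y‖ ≤ s0} = Metric.closedBall 0 s0 := by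
      ext y; simp [Metric.mem_closedBall, dist_zero_right]
    rw [hbe]; exact isCompact_closedBall 0 s0
  have hWt0c : ContinuousOn (fun y => W t0 y) {y : EuclideanSpace ℝ (Fin n) | ‖y‖ ≤ s0} := by
    have h1 : ContinuousOn (fun q : ℝ × EuclideanSpace ℝ (Fin n) => W q.1 q.2) (Ici 0 ×ˢ univ) :=
      hWC2.continuousOn
    exact h1.comp (continuous_const.prodMk continuous_id).continuousOn
      (fun y _ => ⟨ht0, mem_univ _⟩)
  have hΩbdd : BddAbove ((fun y => W t0 y) '' {y : EuclideanSpace ℝ (Fin n) | ‖y‖ ≤ s0}) :=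
    (hballc.image_of_continuousOn hWt0c).bddAbove
  have hx0m : W t0 x0 ∈ (fun y => W t0 y) '' {y : EuclideanSpace ℝ (Fin n) | ‖y‖ ≤ s0} :=
    mem_image_of_mem (fun y => W t0 y)
      (by simp only [mem_setOf_eq, hs0def]; linarith [norm_nonneg x0])
  have hW0le : W t0 x0 ≤ sSup ((fun y => W t0 y) '' {y : EuclideanSpace ℝ (Fin n) | ‖y‖ ≤ s0}) :=
    le_csSup hΩbdd hx0m
  have hΩ1 : (1:ℝ) ≤ sSup ((fun y => W t0 y) '' {y : EuclideanSpace ℝ (Fin n) | ‖y‖ ≤ s0}) :=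
    le_trans (hW1 t0 ht0 x0) hW0le
  have hexpτ1 : 1 ≤ Real.exp (2*c*τ) := Real.one_le_exp (by positivity)
  -- a priori bound for x0
  have hρ : 1 + ‖x0‖ ≤ ρ := by
    refine hQ τ hτ.le s0 hs00 x0 0 t0 ⟨le_rfl, hτ.le⟩ ht0 ?_
    rw [add_zero]
    have h2 : 0 ≤ (2*c)⁻¹ * Real.exp (2*c*τ) * p s0 := by
      have := hpnn s0 hs00
      positivity
    have h3 : W t0 x0 ≤ Real.exp (2*c*τ) *
        sSup ((fun y => W t0 y) '' {y : EuclideanSpace ℝ (Fin n) | ‖y‖ ≤ s0}) := by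
      nlinarith only [hexpτ1, hW0le, hΩ1, hpnn s0 hs00, h2]
    linarith only [h2, h3]
  have hρ1 : 1 ≤ ρ := by linarith [norm_nonneg x0]
  have hsS1 : 1 ≤ sS := by rw [hsSdef]; linarith
  have hsS0' : (0:ℝ) ≤ sS := by linarith
  have hLsS1 : 1 ≤ L sS := hL1 sS
  have hPs1 : 1 ≤ Ps := by
    have h0m : ‖(0 : EuclideanSpace ℝ (Fin n))‖ ≤ sS * (1 + τ * L sS) := by
      rw [norm_zero]
      exact mul_nonneg hsS0' (by nlinarith only [hτ, hLsS1])
    have hkey := hP1 sS hsS0' 0 le_rfl 0 h0m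
    have hL0 : (0:ℝ) ≤ L sS := by linarith
    have h1 := abs_nonneg (derivWithin (fun s' => derivWithin (fun s'' => W s'' (0:EuclideanSpace ℝ (Fin n))) (Ici 0) s') (Ici 0) 0)
    have h2 := norm_nonneg (derivWithin (fun s' => gradient (fun y => W s' y) (0:EuclideanSpace ℝ (Fin n))) (Ici 0) 0)
    have h3 := norm_nonneg (fderiv ℝ (fun y => gradient (fun y' => W (0:ℝ) y') y) (0:EuclideanSpace ℝ (Fin n)))
    have e1 : 0 ≤ 2 * sS * L sS * ‖derivWithin (fun s' => gradient (fun y => W s' y) (0:EuclideanSpace ℝ (Fin n))) (Ici 0) 0‖ :=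
      mul_nonneg (mul_nonneg (by linarith) hL0) h2
    have e2 : 0 ≤ sS ^ 2 * L sS ^ 2 * ‖fderiv ℝ (fun y => gradient (fun y' => W (0:ℝ) y') y) (0:EuclideanSpace ℝ (Fin n))‖ :=
      mul_nonneg (mul_nonneg (sq_nonneg _) (sq_nonneg _)) h3
    linarith
  have hPs0 : (0:ℝ) ≤ Ps := by linarith
  have hhPs : h * Ps ≤ c := by
    have := (le_div_iff₀ (by linarith : (0:ℝ) < Ps)).mp hstep
    linarith
  -- measurability
  have hpu_meas : Measurable (fun s => p ‖u s‖) := by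
    have hpmax : Continuous (fun r : ℝ => p (max r 0)) :=
      hpc.comp_continuous (continuous_id.max continuous_const)
        (fun r => mem_Ici.mpr (le_max_right _ _))
    have heq : (fun s => p ‖u s‖) = (fun r : ℝ => p (max r 0)) ∘ (fun s => ‖u s‖) :=
      funext fun s => by simp [Function.comp, max_eq_left (norm_nonneg (u s))]
    rw [heq]; exact hpmax.measurable.comp hum.norm
  have hfmx : ∀ x : EuclideanSpace ℝ (Fin n), Measurable (fun s => f s x (u s)) := fun x =>
    hfc.measurable.comp (measurable_id.prodMk (measurable_const.prodMk hum))
  -- a.e. bounds on subintervals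
  have hpuae : ∀ a b : ℝ, t0 ≤ a → b ≤ t0 + τ →
      (∀ᵐ s ∂(volume.restrict (Icc a b)), ‖u s‖ ≤ uB) := by
    intro a b h1 h2
    refine huB.filter_mono (ae_mono (Measure.restrict_mono ?_ le_rfl))
    intro s hs
    rw [mem_Icc] at hs ⊢
    exact ⟨le_trans h1 hs.1, le_trans hs.2 h2⟩
  have hIpu : ∀ a b : ℝ, t0 ≤ a → a ≤ b → b ≤ t0 + τ →
      IntervalIntegrable (fun s => p ‖u s‖) volume a b := by
    intro a b h1 h2 h3
    apply aux_II h2 hpu_meas.aestronglyMeasurable.restrict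
    have hb := (hpuae a b h1 h3).filter_mono
      (ae_mono (Measure.restrict_mono Ioc_subset_Icc_self le_rfl))
    filter_upwards [hb] with s hs
    rw [abs_of_nonneg (hpnn _ (norm_nonneg _))]
    exact hpmono (mem_Ici.mpr (norm_nonneg _)) (mem_Ici.mpr huB0) hs
  have hIexp_pu : ∀ a b T' : ℝ, t0 ≤ a → a ≤ b → b ≤ t0 + τ →
      IntervalIntegrable (fun s => Real.exp (2*c*(T' - s)) * p ‖u s‖) volume a b := by
    intro a b T' h1 h2 h3
    exact (hIpu a b h1 h2 h3).continuousOn_mul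
      ((Real.continuous_exp.comp (continuous_const.mul
        (continuous_const.sub continuous_id))).continuousOn)
  -- ===== a priori bound via hQ =====
  have hQb : ∀ (i : ℕ), i ≤ N →
      W (t0 + (i:ℝ)*h) (xs i) ≤ Real.exp (2*c*(i:ℝ)*h) * W t0 x0
        + (∫ s in t0..(t0 + (i:ℝ)*h), Real.exp (2*c*(t0+(i:ℝ)*h - s)) * p ‖u s‖) →
      1 + ‖xs i‖ ≤ ρ := by
    intro i hiN hWi
    have hih0 : 0 ≤ (i:ℝ)*h := by positivity
    have hihτ : (i:ℝ)*h ≤ τ := by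
      have hiN' : (i:ℝ) ≤ (N:ℝ) := by exact_mod_cast hiN
      nlinarith only [hiN', hh0, hNh]
    have hTτ : t0 + (i:ℝ)*h ≤ t0 + τ := by linarith
    have hTt0 : t0 ≤ t0 + (i:ℝ)*h := by linarith
    -- FTC for the exponential weight
    have hint1 : (∫ s in t0..(t0 + (i:ℝ)*h), Real.exp (2*c*(t0 + (i:ℝ)*h - s)))
        = (2*c)⁻¹ * (Real.exp (2*c*((i:ℝ)*h)) - 1) := by
      have hder : ∀ s ∈ uIcc t0 (t0 + (i:ℝ)*h),
          HasDerivAt (fun r => -(2*c)⁻¹ * Real.exp (2*c*(t0 + (i:ℝ)*h - r)))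
            (Real.exp (2*c*(t0 + (i:ℝ)*h - s))) s := by
        intro s _
        have h1 : HasDerivAt (fun r : ℝ => 2*c*(t0 + (i:ℝ)*h - r)) (2*c*(0-1)) s :=
          ((hasDerivAt_const s (t0 + (i:ℝ)*h)).sub (hasDerivAt_id' s)).const_mul (2*c)
        have h2 := (h1.exp).const_mul (-(2*c)⁻¹)
        refine h2.congr_deriv ?_
        have hc2 : (2:ℝ)*c ≠ 0 := by positivity
        linear_combination (Real.exp (2*c*(t0 + (i:ℝ)*h - s))) * mul_inv_cancel₀ hc2
      have hci : IntervalIntegrable (fun s => Real.exp (2*c*(t0 + (i:ℝ)*h - s)))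
          volume t0 (t0 + (i:ℝ)*h) :=
        ((Real.continuous_exp.comp (continuous_const.mul
          (continuous_const.sub continuous_id))).intervalIntegrable _ _)
      rw [intervalIntegral.integral_eq_sub_of_hasDerivAt hder hci]
      simp only [sub_self, mul_zero, Real.exp_zero]
      rw [show t0 + (i:ℝ)*h - t0 = (i:ℝ)*h from by ring]
      ring
    have hest2 : (∫ s in t0..(t0 + (i:ℝ)*h), Real.exp (2*c*(t0 + (i:ℝ)*h - s)) * p ‖u s‖)
        ≤ (2*c)⁻¹ * Real.exp (2*c*τ) * p s0 := by
      have hci : IntervalIntegrable (fun s => Real.exp (2*c*(t0 + (i:ℝ)*h - s)) * p uB)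
          volume t0 (t0 + (i:ℝ)*h) :=
        (((Real.continuous_exp.comp (continuous_const.mul
          (continuous_const.sub continuous_id))).mul continuous_const).intervalIntegrable _ _)
      have step1 : (∫ s in t0..(t0 + (i:ℝ)*h), Real.exp (2*c*(t0 + (i:ℝ)*h - s)) * p ‖u s‖)
          ≤ ∫ s in t0..(t0 + (i:ℝ)*h), Real.exp (2*c*(t0 + (i:ℝ)*h - s)) * p uB := by
        refine intervalIntegral.integral_mono_ae_restrict hTt0
          (hIexp_pu t0 (t0 + (i:ℝ)*h) (t0 + (i:ℝ)*h) le_rfl hTt0 hTτ) hci ?_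
        filter_upwards [hpuae t0 (t0 + (i:ℝ)*h) le_rfl hTτ] with s hs
        exact mul_le_mul_of_nonneg_left
          (hpmono (mem_Ici.mpr (norm_nonneg _)) (mem_Ici.mpr huB0) hs) (Real.exp_nonneg _)
      have step2 : (∫ s in t0..(t0 + (i:ℝ)*h), Real.exp (2*c*(t0 + (i:ℝ)*h - s)) * p uB)
          = (2*c)⁻¹ * (Real.exp (2*c*((i:ℝ)*h)) - 1) * p uB := by
        rw [intervalIntegral.integral_mul_const, hint1]
      have hpuB0 : 0 ≤ p uB := hpnn uB huB0
      have hpuBs0 : p uB ≤ p s0 := hpmono (mem_Ici.mpr huB0) (mem_Ici.mpr hs00)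
        (by rw [hs0def]; linarith [norm_nonneg x0])
      have hee : Real.exp (2*c*((i:ℝ)*h)) - 1 ≤ Real.exp (2*c*τ) := by
        have := Real.exp_le_exp.mpr (by nlinarith only [hihτ, hc] : 2*c*((i:ℝ)*h) ≤ 2*c*τ)
        linarith
      have hc2 : (0:ℝ) < (2*c)⁻¹ := by positivity
      have hee0 : 0 ≤ Real.exp (2*c*((i:ℝ)*h)) - 1 := by
        have := Real.one_le_exp (by positivity : (0:ℝ) ≤ 2*c*((i:ℝ)*h))
        linarith
      calc (∫ s in t0..(t0 + (i:ℝ)*h), Real.exp (2*c*(t0 + (i:ℝ)*h - s)) * p ‖u s‖)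
          ≤ (2*c)⁻¹ * (Real.exp (2*c*((i:ℝ)*h)) - 1) * p uB := by rw [← step2]; exact step1
        _ ≤ (2*c)⁻¹ * Real.exp (2*c*τ) * p s0 := by
            apply mul_le_mul _ hpuBs0 hpuB0 (by positivity)
            exact mul_le_mul_of_nonneg_left hee hc2.le
    refine hQ τ hτ.le s0 hs00 (xs i) ((i:ℝ)*h) t0 ⟨hih0, hihτ⟩ ht0 ?_
    have e3 : Real.exp (2*c*(i:ℝ)*h) * W t0 x0 ≤ Real.exp (2*c*τ) *
        sSup ((fun y => W t0 y) '' {y : EuclideanSpace ℝ (Fin n) | ‖y‖ ≤ s0}) := by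
      apply mul_le_mul (Real.exp_le_exp.mpr (by nlinarith only [hihτ, hc])) hW0le
        (le_trans zero_le_one (hW1 t0 ht0 x0)) (Real.exp_nonneg _)
    calc W (t0 + (i:ℝ)*h) (xs i)
        ≤ Real.exp (2*c*(i:ℝ)*h) * W t0 x0
          + (∫ s in t0..(t0 + (i:ℝ)*h), Real.exp (2*c*(t0+(i:ℝ)*h - s)) * p ‖u s‖) := hWi
      _ ≤ Real.exp (2*c*τ) * sSup ((fun y => W t0 y) '' {y : EuclideanSpace ℝ (Fin n) | ‖y‖ ≤ s0})
          + (2*c)⁻¹ * Real.exp (2*c*τ) * p s0 := add_le_add e3 hest2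
  -- ===== one-step estimate =====
  have hstep_main : ∀ t : ℝ, t0 ≤ t → t + h ≤ t0 + τ → ∀ x : EuclideanSpace ℝ (Fin n),
      1 + ‖x‖ ≤ ρ →
      W (t+h) (x + ∫ s in t..(t+h), f s x (u s)) ≤ Real.exp (2*c*h) * W t x
        + ∫ s in t..(t+h), Real.exp (2*c*(t+h-s)) * p ‖u s‖ := by
    intro t ht0t hbτ x hxB
    have ht : 0 ≤ t := le_trans ht0 ht0t
    have htb : t ≤ t + h := by linarith
    have hxρ : ‖x‖ ≤ ρ - 1 := by linarith
    have hL0 : (0:ℝ) ≤ L sS := by linarith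
    have hM0 : (0:ℝ) ≤ sS * L sS := mul_nonneg hsS0' hL0
    have hxsS : ‖x‖ + uB ≤ sS := by rw [hsSdef]; linarith
    have huaeI : ∀ᵐ s ∂(volume.restrict (Icc t (t+h))), ‖u s‖ ≤ uB :=
      hpuae t (t+h) ht0t hbτ
    have huaeO : ∀ᵐ s ∂(volume.restrict (Ioc t (t+h))), ‖u s‖ ≤ uB :=
      huaeI.filter_mono (ae_mono (Measure.restrict_mono Ioc_subset_Icc_self le_rfl))
    have hfae : ∀ᵐ s ∂(volume.restrict (Ioc t (t+h))), ‖f s x (u s)‖ ≤ sS * L sS := by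
      filter_upwards [huaeO, ae_restrict_mem measurableSet_Ioc] with s hs1 hs2
      have hs0 : (0:ℝ) ≤ s := le_trans ht hs2.1.le
      have h1 : ‖x‖ + ‖u s‖ ≤ sS := by linarith
      have h0 : (0:ℝ) ≤ ‖x‖ + ‖u s‖ := add_nonneg (norm_nonneg _) (norm_nonneg _)
      calc ‖f s x (u s)‖ ≤ (‖x‖ + ‖u s‖) * L (‖x‖ + ‖u s‖) := hgr s hs0 x (u s)
        _ ≤ sS * L sS := mul_le_mul h1 (hLm h1) (le_trans zero_le_one (hL1 _)) hsS0'
    have hfint : IntervalIntegrable (fun s => f s x (u s)) volume t (t+h) :=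
      aux_IIv htb ((hfmx x).aestronglyMeasurable.restrict) hfae
    have hΔle : ‖∫ s in t..(t+h), f s x (u s)‖ ≤ h * (sS * L sS) := by
      have hb := intervalIntegral.norm_integral_le_of_norm_le (μ := volume)
        (f := fun s => f s x (u s)) (g := fun _ => sS * L sS)
        htb ((ae_restrict_iff' measurableSet_Ioc).mp hfae) intervalIntegrable_const
      rw [intervalIntegral.integral_const] at hb
      rw [smul_eq_mul] at hb
      calc ‖∫ s in t..(t+h), f s x (u s)‖ ≤ |(t + h - t) * (sS * L sS)| := hb.trans (le_abs_self _)
        _ = h * (sS * L sS) := by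
            rw [abs_of_nonneg (by nlinarith only [hh0, hM0])]; ring
    -- Taylor estimate
    have hKb : ∀ θ : ℝ, 0 < θ → θ < 1 →
        h ^ 2 * |derivWithin (fun s' => derivWithin (fun s'' => W s''
            (x + θ • (∫ s in t..(t+h), f s x (u s)))) (Ici 0) s') (Ici 0) (t + θ * h)|
          + 2 * h * ‖∫ s in t..(t+h), f s x (u s)‖ * ‖derivWithin (fun s' => gradient (fun y => W s' y)
            (x + θ • (∫ s in t..(t+h), f s x (u s)))) (Ici 0) (t + θ * h)‖
          + ‖∫ s in t..(t+h), f s x (u s)‖ ^ 2 * ‖fderiv ℝ (fun y => gradient (fun y' => W (t + θ * h) y') y)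
            (x + θ • (∫ s in t..(t+h), f s x (u s)))‖ ≤ h^2 * Ps := by
      intro θ hθ0 hθ1
      have htθ : 0 ≤ t + θ*h := by nlinarith only [ht, hθ0, hh0]
      have hΔθ : ‖x + θ • (∫ s in t..(t+h), f s x (u s))‖ ≤ sS * (1 + τ * L sS) := by
        have h1 : ‖x + θ • (∫ s in t..(t+h), f s x (u s))‖
            ≤ ‖x‖ + θ * ‖∫ s in t..(t+h), f s x (u s)‖ := by
          calc ‖x + θ • (∫ s in t..(t+h), f s x (u s))‖
              ≤ ‖x‖ + ‖θ • (∫ s in t..(t+h), f s x (u s))‖ := norm_add_le _ _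
            _ = ‖x‖ + |θ| * ‖∫ s in t..(t+h), f s x (u s)‖ := by rw [norm_smul, Real.norm_eq_abs]
            _ = ‖x‖ + θ * ‖∫ s in t..(t+h), f s x (u s)‖ := by rw [abs_of_pos hθ0]
        have h2 : θ * ‖∫ s in t..(t+h), f s x (u s)‖ ≤ h * (sS * L sS) := by
          have h3 : θ * ‖∫ s in t..(t+h), f s x (u s)‖ ≤ 1 * (h * (sS * L sS)) := by
            apply mul_le_mul hθ1.le hΔle (norm_nonneg _) zero_le_one
          linarith
        have h4 : h * (sS * L sS) ≤ τ * (sS * L sS) :=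
          mul_le_mul_of_nonneg_right hhτ hM0
        have h5 : sS * (1 + τ * L sS) = sS + τ * (sS * L sS) := by ring
        rw [h5]
        linarith
      have hP1i := hP1 sS hsS0' (t + θ*h) htθ _ hΔθ
      set A1 := |derivWithin (fun s' => derivWithin (fun s'' => W s''
        (x + θ • (∫ s in t..(t+h), f s x (u s)))) (Ici 0) s') (Ici 0) (t + θ*h)| with hA1
      set A2 := ‖derivWithin (fun s' => gradient (fun y => W s' y)
        (x + θ • (∫ s in t..(t+h), f s x (u s)))) (Ici 0) (t + θ*h)‖ with hA2
      set A3 := ‖fderiv ℝ (fun y => gradient (fun y' => W (t + θ*h) y') y)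
        (x + θ • (∫ s in t..(t+h), f s x (u s)))‖ with hA3
      have hA10 : 0 ≤ A1 := abs_nonneg _
      have hA20 : 0 ≤ A2 := norm_nonneg _
      have hA30 : 0 ≤ A3 := norm_nonneg _
      have hΔ0 : 0 ≤ ‖∫ s in t..(t+h), f s x (u s)‖ := norm_nonneg _
      have e1 : 2 * h * ‖∫ s in t..(t+h), f s x (u s)‖ * A2 ≤ h^2 * (2 * sS * L sS * A2) := by
        have : 2 * h * ‖∫ s in t..(t+h), f s x (u s)‖ * A2
            = (2 * h * A2) * ‖∫ s in t..(t+h), f s x (u s)‖ := by ring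
        rw [this]
        have h6 : (2 * h * A2) * ‖∫ s in t..(t+h), f s x (u s)‖
            ≤ (2 * h * A2) * (h * (sS * L sS)) :=
          mul_le_mul_of_nonneg_left hΔle (by positivity)
        calc (2 * h * A2) * ‖∫ s in t..(t+h), f s x (u s)‖
            ≤ (2 * h * A2) * (h * (sS * L sS)) := h6
          _ = h^2 * (2 * sS * L sS * A2) := by ring
      have e2 : ‖∫ s in t..(t+h), f s x (u s)‖^2 * A3 ≤ h^2 * (sS^2 * L sS^2 * A3) := by
        have h7 : ‖∫ s in t..(t+h), f s x (u s)‖^2 ≤ (h * (sS * L sS))^2 :=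
          pow_le_pow_left₀ hΔ0 hΔle 2
        calc ‖∫ s in t..(t+h), f s x (u s)‖^2 * A3 ≤ (h * (sS * L sS))^2 * A3 :=
            mul_le_mul_of_nonneg_right h7 hA30
          _ = h^2 * (sS^2 * L sS^2 * A3) := by ring
      have e3 : h^2 * A1 + h^2 * (2 * sS * L sS * A2) + h^2 * (sS^2 * L sS^2 * A3)
          ≤ h^2 * (Ps - 1) := by
        have h8 : A1 + 2 * sS * L sS * A2 + sS^2 * L sS^2 * A3 ≤ Ps - 1 := by linarith only [hP1i]
        calc h^2 * A1 + h^2 * (2 * sS * L sS * A2) + h^2 * (sS^2 * L sS^2 * A3)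
            = h^2 * (A1 + 2 * sS * L sS * A2 + sS^2 * L sS^2 * A3) := by ring
          _ ≤ h^2 * (Ps - 1) := mul_le_mul_of_nonneg_left h8 (sq_nonneg h)
      have e4 := add_le_add (add_le_add (le_refl (h^2 * A1)) e1) e2
      have e5 : h^2 * (Ps - 1) ≤ h^2 * Ps := by
        have := sq_nonneg h
        linarith only [this]
      linarith only [e3, e4, e5]
    have hT := aux_taylor_W hWC2 t ht h hh0 x (∫ s in t..(t+h), f s x (u s)) (h^2 * Ps) hKb
    -- name key quantities
    have hW1' : (1:ℝ) ≤ W t x := hW1 t ht x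
    have hintOc : IntegrableOn (fun s => f s x (u s)) (Ioc t (t+h)) volume :=
      (intervalIntegrable_iff_integrableOn_Ioc_of_le htb).mp hfint
    have hinner : (inner ℝ (gradient (fun y => W t y) x) (∫ s in t..(t+h), f s x (u s)) : ℝ)
        = ∫ s in t..(t+h), (inner ℝ (gradient (fun y => W t y) x) (f s x (u s)) : ℝ) := by
      rw [intervalIntegral.integral_of_le htb, intervalIntegral.integral_of_le htb]
      exact (integral_inner hintOc (gradient (fun y => W t y) x)).symm
    have hg0n : ‖gradient (fun y => W t y) x‖ ≤ Real.sqrt Ps := by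
      refine le_trans (hP2 t ht x) (Real.sqrt_le_sqrt ?_)
      exact hPm (mem_Ici.mpr (norm_nonneg x)) (mem_Ici.mpr hsS0') (by linarith)
    have hIinner : IntervalIntegrable
        (fun s => (inner ℝ (gradient (fun y => W t y) x) (f s x (u s)) : ℝ)) volume t (t+h) := by
      apply aux_II htb
      · exact (Continuous.inner continuous_const continuous_id).measurable.comp
          (hfmx x) |>.aestronglyMeasurable.restrict
      · filter_upwards [hfae] with s hs
        calc |(inner ℝ (gradient (fun y => W t y) x) (f s x (u s)) : ℝ)|
            ≤ ‖gradient (fun y => W t y) x‖ * ‖f s x (u s)‖ := abs_real_inner_le_norm _ _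
          _ ≤ ‖gradient (fun y => W t y) x‖ * (sS * L sS) :=
              mul_le_mul_of_nonneg_left hs (norm_nonneg _)
    have hIlin : IntervalIntegrable (fun s => (s - t) * Ps) volume t (t+h) :=
      (((continuous_id.sub continuous_const).mul continuous_const).intervalIntegrable _ _)
    have hIrhs : IntervalIntegrable
        (fun s => (c * W t x - derivWithin (fun s' => W s' x) (Ici 0) t) + p ‖u s‖ + (s - t) * Ps)
        volume t (t+h) :=
      (intervalIntegrable_const.add (hIpu t (t+h) ht0t htb hbτ)).add hIlin
    have hptwise : ∀ᵐ s ∂(volume.restrict (Icc t (t+h))),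
        (inner ℝ (gradient (fun y => W t y) x) (f s x (u s)) : ℝ)
        ≤ (c * W t x - derivWithin (fun s' => W s' x) (Ici 0) t) + p ‖u s‖ + (s - t) * Ps := by
      filter_upwards [huaeI, ae_restrict_mem measurableSet_Icc] with s hus hs
      have hst : t ≤ s := hs.1
      have hd := hdiss t ht x (u s)
      have hsplit : (inner ℝ (gradient (fun y => W t y) x) (f s x (u s)) : ℝ)
          = (inner ℝ (gradient (fun y => W t y) x) (f t x (u s)) : ℝ)
            + (inner ℝ (gradient (fun y => W t y) x) (f s x (u s) - f t x (u s)) : ℝ) := by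
        rw [← inner_add_right, add_sub_cancel]
      have h2 : (inner ℝ (gradient (fun y => W t y) x) (f s x (u s) - f t x (u s)) : ℝ)
          ≤ (s - t) * Ps := by
        have hPle : P (‖x‖ + ‖u s‖) ≤ Ps :=
          hPm (mem_Ici.mpr (add_nonneg (norm_nonneg _) (norm_nonneg _)))
            (mem_Ici.mpr hsS0') (by linarith)
        have hs1 := Real.sqrt_le_sqrt hPle
        have hs2 : (0:ℝ) ≤ Real.sqrt Ps := Real.sqrt_nonneg _
        have hs3 : (0:ℝ) ≤ Real.sqrt (P (‖x‖ + ‖u s‖)) := Real.sqrt_nonneg _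
        calc (inner ℝ (gradient (fun y => W t y) x) (f s x (u s) - f t x (u s)) : ℝ)
            ≤ ‖gradient (fun y => W t y) x‖ * ‖f s x (u s) - f t x (u s)‖ :=
              real_inner_le_norm _ _
          _ ≤ Real.sqrt Ps * ((s - t) * Real.sqrt (P (‖x‖ + ‖u s‖))) := by
              apply mul_le_mul hg0n (hP3 t ht s hst x (u s)) (norm_nonneg _) hs2
          _ ≤ Real.sqrt Ps * ((s - t) * Real.sqrt Ps) := by
              apply mul_le_mul_of_nonneg_left _ hs2
              apply mul_le_mul_of_nonneg_left hs1 (by linarith)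
          _ = (s - t) * (Real.sqrt Ps * Real.sqrt Ps) := by ring
          _ = (s - t) * Ps := by rw [Real.mul_self_sqrt hPs0]
      linarith
    have hmono := intervalIntegral.integral_mono_ae_restrict htb hIinner hIrhs hptwise
    -- compute the RHS integral
    have hsub : (∫ s in t..(t+h), (s - t)) = h^2/2 := by
      have hcs := intervalIntegral.integral_comp_sub_right (a := t) (b := t+h) (fun r => r) t
      rw [hcs, integral_id]
      ring
    have hrhs : (∫ s in t..(t+h),
        ((c * W t x - derivWithin (fun s' => W s' x) (Ici 0) t) + p ‖u s‖ + (s - t) * Ps))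
        = (c * W t x - derivWithin (fun s' => W s' x) (Ici 0) t) * h
          + (∫ s in t..(t+h), p ‖u s‖) + Ps * (h^2/2) := by
      rw [intervalIntegral.integral_add (intervalIntegrable_const.add
        (hIpu t (t+h) ht0t htb hbτ)) hIlin]
      rw [intervalIntegral.integral_add intervalIntegrable_const
        (hIpu t (t+h) ht0t htb hbτ)]
      rw [intervalIntegral.integral_const, intervalIntegral.integral_mul_const, hsub]
      rw [smul_eq_mul]
      ring
    -- final assembly
    have hquad : h^2 * Ps ≤ c * h * W t x := by
      have e : h^2 * Ps = h * (h * Ps) := by ring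
      rw [e]
      calc h * (h * Ps) ≤ h * c := mul_le_mul_of_nonneg_left hhPs hh0.le
        _ = c * h * 1 := by ring
        _ ≤ c * h * W t x := by
            apply mul_le_mul_of_nonneg_left hW1' (by positivity)
    have hexp1 : (1 + 2*(c*h)) * W t x ≤ Real.exp (2*c*h) * W t x := by
      apply mul_le_mul_of_nonneg_right _ (by linarith)
      have := Real.add_one_le_exp (2*c*h)
      calc 1 + 2*(c*h) = 2*c*h + 1 := by ring
        _ ≤ Real.exp (2*c*h) := Real.add_one_le_exp (2*c*h)
    have hpint : (∫ s in t..(t+h), p ‖u s‖)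
        ≤ ∫ s in t..(t+h), Real.exp (2*c*(t+h-s)) * p ‖u s‖ := by
      refine intervalIntegral.integral_mono_ae_restrict htb
        (hIpu t (t+h) ht0t htb hbτ) (hIexp_pu t (t+h) (t+h) ht0t htb hbτ) ?_
      filter_upwards [ae_restrict_mem measurableSet_Icc] with s hs
      have h1 : 0 ≤ p ‖u s‖ := hpnn _ (norm_nonneg _)
      have h2 : 1 ≤ Real.exp (2*c*(t+h-s)) := Real.one_le_exp (by nlinarith only [hs.2, hc])
      nlinarith only [h1, h2]
    rw [hinner] at hT
    calc W (t+h) (x + ∫ s in t..(t+h), f s x (u s))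
        ≤ W t x + (h * derivWithin (fun s' => W s' x) (Ici 0) t
          + ∫ s in t..(t+h), (inner ℝ (gradient (fun y => W t y) x) (f s x (u s)) : ℝ))
          + h^2 * Ps / 2 := hT
      _ ≤ W t x + (h * derivWithin (fun s' => W s' x) (Ici 0) t
          + ((c * W t x - derivWithin (fun s' => W s' x) (Ici 0) t) * h
            + (∫ s in t..(t+h), p ‖u s‖) + Ps * (h^2/2))) + h^2 * Ps / 2 := by
          rw [← hrhs]; linarith only [hmono]
      _ = (1 + c*h) * W t x + (∫ s in t..(t+h), p ‖u s‖) + h^2 * Ps := by ring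
      _ ≤ (1 + 2*(c*h)) * W t x + (∫ s in t..(t+h), p ‖u s‖) := by nlinarith only [hquad, hW1', hc, hh0]
      _ ≤ Real.exp (2*c*h) * W t x + (∫ s in t..(t+h), p ‖u s‖) := by linarith only [hexp1]
      _ ≤ Real.exp (2*c*h) * W t x
          + ∫ s in t..(t+h), Real.exp (2*c*(t+h-s)) * p ‖u s‖ := by linarith only [hpint]

  -- ===== induction =====
  intro i
  induction i with
  | zero =>
    intro _
    simp only [Nat.cast_zero, zero_mul, add_zero, mul_zero]
    rw [intervalIntegral.integral_same, hxs0]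
    simp
  | succ i ih =>
    intro hi1
    have hiN : i ≤ N := le_of_lt (Nat.lt_of_succ_le hi1)
    have hiN' : i < N := Nat.lt_of_succ_le hi1
    have IH := ih hiN
    have hBi := hQb i hiN IH
    have hc1 : ((i+1 : ℕ):ℝ) = (i:ℝ) + 1 := by push_cast; ring
    rw [hc1]
    have hbeq : t0 + ((i:ℝ)+1)*h = (t0 + (i:ℝ)*h) + h := by ring
    rw [hbeq]
    have hih0 : 0 ≤ (i:ℝ)*h := by positivity
    have hi1R : ((i:ℝ)+1) ≤ (N:ℝ) := by exact_mod_cast hi1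
    have ht0ti : t0 ≤ t0 + (i:ℝ)*h := by linarith
    have htibτ : (t0 + (i:ℝ)*h) + h ≤ t0 + τ := by nlinarith only [hi1R, hh0, hNh]
    have hxsi : xs (i + 1) = xs i
        + ∫ s in (t0 + (i:ℝ)*h)..((t0 + (i:ℝ)*h) + h), f s (xs i) (u s) := by
      rw [hxs i hiN', ← hbeq]
    rw [hxsi]
    have hstepi := hstep_main (t0 + (i:ℝ)*h) ht0ti htibτ (xs i) hBi
    -- multiply IH by exp(2ch)
    have hexpcomb : Real.exp (2*c*h) * (Real.exp (2*c*(i:ℝ)*h) * W t0 x0)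
        = Real.exp (2*c*((i:ℝ)+1)*h) * W t0 x0 := by
      rw [← mul_assoc, ← Real.exp_add, show 2*c*h + 2*c*(i:ℝ)*h = 2*c*((i:ℝ)+1)*h from by ring]
    have hintcomb : Real.exp (2*c*h) * (∫ s in t0..(t0 + (i:ℝ)*h),
          Real.exp (2*c*(t0+(i:ℝ)*h - s)) * p ‖u s‖)
        = ∫ s in t0..(t0 + (i:ℝ)*h),
            Real.exp (2*c*((t0 + (i:ℝ)*h) + h - s)) * p ‖u s‖ := by
      rw [← intervalIntegral.integral_const_mul]
      congr 1
      funext s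
      rw [← mul_assoc, ← Real.exp_add]
      congr 2
      ring
    have hIH2 := mul_le_mul_of_nonneg_left IH (Real.exp_nonneg (2*c*h))
    rw [mul_add, hexpcomb, hintcomb] at hIH2
    have hadj := intervalIntegral.integral_add_adjacent_intervals
      (hIexp_pu t0 (t0 + (i:ℝ)*h) ((t0 + (i:ℝ)*h) + h) le_rfl ht0ti (by linarith))
      (hIexp_pu (t0 + (i:ℝ)*h) ((t0 + (i:ℝ)*h) + h) ((t0 + (i:ℝ)*h) + h)
        ht0ti (by linarith) htibτ)
    have hfin : Real.exp (2*c*((i:ℝ)+1)*h) * W t0 x0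
        + (∫ s in t0..(t0 + (i:ℝ)*h), Real.exp (2*c*((t0 + (i:ℝ)*h) + h - s)) * p ‖u s‖)
        + (∫ s in (t0 + (i:ℝ)*h)..((t0 + (i:ℝ)*h) + h),
            Real.exp (2*c*((t0 + (i:ℝ)*h) + h - s)) * p ‖u s‖)
        = Real.exp (2*c*((i:ℝ)+1)*h) * W t0 x0
        + ∫ s in t0..((t0 + (i:ℝ)*h) + h),
            Real.exp (2*c*((t0 + (i:ℝ)*h) + h - s)) * p ‖u s‖ := by
      rw [add_assoc, hadj]
    linarith only [hstepi, hIH2, hfin]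
end

section
/- Define W(t,x) := 1 + (1/2)·((ζ_{2,d}(t)+x₂)/(1+(ζ_{1,d}(t)+x₁)²))² + F(arctan(ζ_{1,d}(t)+x₁)) for t ≥ 0, x ∈ ℝ², let G̃ := sup{ G(q, q̇) : (q, q̇) ∈ (−π/2,π/2)×ℝ }, and set c := 1/2 + G̃²·sup_{t ≥ −τ} v_d(t)². Then W : [0,∞)×ℝ² → [1,∞) is C² and for all t ≥ 0, x ∈ ℝ² and u ∈ ℝ: ∂W/∂t(t,x) + ∂W/∂x₁(t,x)·x₂ + ∂W/∂x₂(t,x)·(f̃(t,x) + g̃(t,x)u) ≤ c·W(t,x) + G̃²u². -/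
open Set Real Filter

/- STATEMENT 11: The energy function W is C² on [0,∞)×ℝ², takes values in [1,∞),
   and satisfies the dissipation inequality with c = 1/2 + G̃²·sup v_d² and p(s) = G̃²s². -/

noncomputable def vec2 (a b : ℝ) : EuclideanSpace ℝ (Fin 2) :=
  (WithLp.equiv 2 (Fin 2 → ℝ)).symm ![a, b]

noncomputable def g1f (F H : ℝ → ℝ) (ζ : EuclideanSpace ℝ (Fin 2)) : ℝ :=
  -(1 + (ζ 0) ^ 2) * deriv F (Real.arctan (ζ 0))
    + (2 * ζ 0 / (1 + (ζ 0) ^ 2)) * (ζ 1) ^ 2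
    - (1 + (ζ 0) ^ 2) * H (ζ 1 / (1 + (ζ 0) ^ 2))

noncomputable def g2f (G : ℝ → ℝ → ℝ) (ζ : EuclideanSpace ℝ (Fin 2)) : ℝ :=
  (1 + (ζ 0) ^ 2) * G (Real.arctan (ζ 0)) (ζ 1 / (1 + (ζ 0) ^ 2))


noncomputable def Wf (F : ℝ → ℝ) (a b : ℝ) : ℝ :=
  1 + (1/2) * (b/(1+a^2))^2 + F (Real.arctan a)
noncomputable def Pa (F : ℝ → ℝ) (a b : ℝ) : ℝ :=
  -(2*a*b^2/(1+a^2)^3) + deriv F (Real.arctan a)/(1+a^2)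
noncomputable def Pb (a b : ℝ) : ℝ := b/(1+a^2)^2

lemma oneaddsq_pos (a : ℝ) : (0:ℝ) < 1 + a^2 := by positivity

lemma hasFDerivAt_Wf (F : ℝ → ℝ) (hF : ContDiffOn ℝ 2 F (Ioo (-(π/2)) (π/2))) (p : ℝ × ℝ) :
    HasFDerivAt (fun q : ℝ × ℝ => Wf F q.1 q.2)
      (Pa F p.1 p.2 • ContinuousLinearMap.fst ℝ ℝ ℝ
        + Pb p.1 p.2 • ContinuousLinearMap.snd ℝ ℝ ℝ) p := by
  have hne : (1 + p.1^2) ≠ 0 := (oneaddsq_pos p.1).ne'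
  -- inverse piece
  have hinv : HasDerivAt (fun s : ℝ => (1+s^2)⁻¹) (-(2*p.1^1)/(1+p.1^2)^2) p.1 := by
    have h2 : HasDerivAt (fun s : ℝ => 1+s^2) (2*p.1^1) p.1 :=
      (hasDerivAt_pow 2 p.1).const_add 1
    exact h2.inv hne
  have u1 : HasFDerivAt (fun q : ℝ × ℝ => ((1:ℝ)+q.1^2)⁻¹)
      ((-(2*p.1^1)/(1+p.1^2)^2) • ContinuousLinearMap.fst ℝ ℝ ℝ) p :=
    hinv.comp_hasFDerivAt p (hasFDerivAt_fst)
  have u2 : HasFDerivAt (fun q : ℝ × ℝ => q.2 * ((1:ℝ)+q.1^2)⁻¹)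
      (p.2 • ((-(2*p.1^1)/(1+p.1^2)^2) • ContinuousLinearMap.fst ℝ ℝ ℝ)
        + ((1:ℝ)+p.1^2)⁻¹ • ContinuousLinearMap.snd ℝ ℝ ℝ) p := by
    exact (hasFDerivAt_snd (𝕜 := ℝ) (E := ℝ) (F := ℝ) (p := p)).mul u1
  have u3 := u2.mul u2
  have u4 := u3.const_mul (1/2 : ℝ)
  -- F ∘ arctan piece
  have hFd : HasDerivAt F (deriv F (Real.arctan p.1)) (Real.arctan p.1) := by
    have hmem : Ioo (-(π/2)) (π/2) ∈ nhds (Real.arctan p.1) :=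
      isOpen_Ioo.mem_nhds ⟨Real.neg_pi_div_two_lt_arctan _, Real.arctan_lt_pi_div_two _⟩
    exact ((hF.contDiffAt hmem).differentiableAt (by norm_num)).hasDerivAt
  have hFA : HasDerivAt (fun a : ℝ => F (Real.arctan a))
      (deriv F (Real.arctan p.1) * (1/(1+p.1^2))) p.1 := by
    simpa [Function.comp_def] using (hFd.comp p.1 (Real.hasDerivAt_arctan p.1))
  have u5 : HasFDerivAt (fun q : ℝ × ℝ => F (Real.arctan q.1))
      ((deriv F (Real.arctan p.1) * (1/(1+p.1^2))) • ContinuousLinearMap.fst ℝ ℝ ℝ) p :=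
    hFA.comp_hasFDerivAt p hasFDerivAt_fst
  have u6 := (u4.const_add (1:ℝ)).add u5
  have : (fun q : ℝ × ℝ => Wf F q.1 q.2)
      = fun q : ℝ × ℝ => (1 + (1/2) * (q.2 * ((1:ℝ)+q.1^2)⁻¹ * (q.2 * ((1:ℝ)+q.1^2)⁻¹)))
        + F (Real.arctan q.1) := by
    funext q; simp [Wf, div_eq_mul_inv]; ring
  rw [this]
  refine u6.congr_fderiv ?_
  refine ContinuousLinearMap.ext fun v => ?_
  simp [Pa, Pb]
  field_simp
  try ring

lemma hasDerivAt_W_time (F : ℝ → ℝ) (hF : ContDiffOn ℝ 2 F (Ioo (-(π/2)) (π/2)))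
    (c1 c2 : ℝ) (ζ1 ζ2 : ℝ → ℝ) (d1 d2 t : ℝ)
    (h1 : HasDerivAt ζ1 d1 t) (h2 : HasDerivAt ζ2 d2 t) :
    HasDerivAt (fun s => Wf F (ζ1 s + c1) (ζ2 s + c2))
      (Pa F (ζ1 t + c1) (ζ2 t + c2) * d1 + Pb (ζ1 t + c1) (ζ2 t + c2) * d2) t := by
  have hp := hasFDerivAt_Wf F hF ((ζ1 t + c1, ζ2 t + c2))
  have hg : HasDerivAt (fun s => (ζ1 s + c1, ζ2 s + c2)) ((d1, d2) : ℝ × ℝ) t :=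
    (h1.add_const c1).prodMk (h2.add_const c2)
  have := hp.comp_hasDerivAt t hg
  simpa [Function.comp_def] using this

lemma hasFDerivAt_W_space (F : ℝ → ℝ) (hF : ContDiffOn ℝ 2 F (Ioo (-(π/2)) (π/2)))
    (c1 c2 : ℝ) (x : EuclideanSpace ℝ (Fin 2)) :
    HasFDerivAt (fun y : EuclideanSpace ℝ (Fin 2) => Wf F (c1 + y 0) (c2 + y 1))
      (Pa F (c1 + x 0) (c2 + x 1) • (EuclideanSpace.proj (0 : Fin 2) : EuclideanSpace ℝ (Fin 2) →L[ℝ] ℝ)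
        + Pb (c1 + x 0) (c2 + x 1) • (EuclideanSpace.proj (1 : Fin 2) : EuclideanSpace ℝ (Fin 2) →L[ℝ] ℝ)) x := by
  have hp := hasFDerivAt_Wf F hF ((c1 + x 0, c2 + x 1))
  have hi : HasFDerivAt (fun y : EuclideanSpace ℝ (Fin 2) => ((c1 + y 0, c2 + y 1) : ℝ × ℝ))
      (((EuclideanSpace.proj (0 : Fin 2) : EuclideanSpace ℝ (Fin 2) →L[ℝ] ℝ).prod
        (EuclideanSpace.proj (1 : Fin 2) : EuclideanSpace ℝ (Fin 2) →L[ℝ] ℝ))) x := by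
    have h0 : HasFDerivAt (fun y : EuclideanSpace ℝ (Fin 2) => y 0)
        (EuclideanSpace.proj (0 : Fin 2) : EuclideanSpace ℝ (Fin 2) →L[ℝ] ℝ) x :=
      (EuclideanSpace.proj (0 : Fin 2) : EuclideanSpace ℝ (Fin 2) →L[ℝ] ℝ).hasFDerivAt
    have h1 : HasFDerivAt (fun y : EuclideanSpace ℝ (Fin 2) => y 1)
        (EuclideanSpace.proj (1 : Fin 2) : EuclideanSpace ℝ (Fin 2) →L[ℝ] ℝ) x :=
      (EuclideanSpace.proj (1 : Fin 2) : EuclideanSpace ℝ (Fin 2) →L[ℝ] ℝ).hasFDerivAt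
    exact (h0.const_add c1).prodMk (h1.const_add c2)
  have := HasFDerivAt.comp (𝕜 := ℝ) x hp hi
  refine this.congr_fderiv ?_
  refine ContinuousLinearMap.ext fun v => ?_
  simp

noncomputable def Gf1 (F H : ℝ → ℝ) (p : ℝ × ℝ) : ℝ :=
  -(1 + p.1^2) * deriv F (Real.arctan p.1) + (2*p.1/(1+p.1^2)) * p.2^2
    - (1+p.1^2) * H (p.2/(1+p.1^2))
noncomputable def Gf2 (G : ℝ → ℝ → ℝ) (p : ℝ × ℝ) : ℝ :=
  (1+p.1^2) * G (Real.arctan p.1) (p.2/(1+p.1^2))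

lemma arctanMemIoo (a : ℝ) : Real.arctan a ∈ Ioo (-(π/2)) (π/2) :=
  ⟨Real.neg_pi_div_two_lt_arctan a, Real.arctan_lt_pi_div_two a⟩

lemma contDiff_Farctan (F : ℝ → ℝ) (hF : ContDiffOn ℝ 2 F (Ioo (-(π/2)) (π/2))) :
    ContDiff ℝ 2 (fun a : ℝ => F (Real.arctan a)) := by
  rw [← contDiffOn_univ]
  exact hF.comp (Real.contDiff_arctan.contDiffOn) (fun a _ => arctanMemIoo a)

lemma contDiff_derivF (F : ℝ → ℝ) (hF : ContDiffOn ℝ 2 F (Ioo (-(π/2)) (π/2))) :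
    ContDiff ℝ 1 (fun a : ℝ => deriv F (Real.arctan a)) := by
  rw [← contDiffOn_univ]
  exact (hF.deriv_of_isOpen isOpen_Ioo (by norm_num)).comp
    (Real.contDiff_arctan.contDiffOn) (fun a _ => arctanMemIoo a)

lemma contDiff_den : ContDiff ℝ 2 (fun p : ℝ × ℝ => 1 + p.1^2) :=
  contDiff_const.add (contDiff_fst.pow 2)

lemma den_ne (p : ℝ × ℝ) : 1 + p.1^2 ≠ 0 := (oneaddsq_pos p.1).ne'

lemma contDiff_Gf1 (F H : ℝ → ℝ) (hF : ContDiffOn ℝ 2 F (Ioo (-(π/2)) (π/2)))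
    (hH : ContDiff ℝ 1 H) : ContDiff ℝ 1 (Gf1 F H) := by
  have hden : ContDiff ℝ 1 (fun p : ℝ × ℝ => 1 + p.1^2) := contDiff_den.of_le (by norm_num)
  have h1 : ContDiff ℝ 1 (fun p : ℝ × ℝ => -(1 + p.1^2) * deriv F (Real.arctan p.1)) :=
    hden.neg.mul ((contDiff_derivF F hF).comp contDiff_fst)
  have h2 : ContDiff ℝ 1 (fun p : ℝ × ℝ => (2*p.1/(1+p.1^2)) * p.2^2) :=
    (((contDiff_const.mul contDiff_fst).div hden den_ne)).mul (contDiff_snd.pow 2)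
  have h3 : ContDiff ℝ 1 (fun p : ℝ × ℝ => (1+p.1^2) * H (p.2/(1+p.1^2))) :=
    hden.mul (hH.comp (contDiff_snd.div hden den_ne))
  exact (h1.add h2).sub h3

lemma contDiff_Gf2 (G : ℝ → ℝ → ℝ)
    (hG : ContDiffOn ℝ 1 (fun p : ℝ × ℝ => G p.1 p.2) (Ioo (-(π/2)) (π/2) ×ˢ univ)) :
    ContDiff ℝ 1 (Gf2 G) := by
  have hden : ContDiff ℝ 1 (fun p : ℝ × ℝ => 1 + p.1^2) := contDiff_den.of_le (by norm_num)
  have hψ : ContDiff ℝ 1 (fun p : ℝ × ℝ => ((Real.arctan p.1, p.2/(1+p.1^2)) : ℝ × ℝ)) :=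
    (Real.contDiff_arctan.comp contDiff_fst).prodMk (contDiff_snd.div hden den_ne)
  have hcomp : ContDiff ℝ 1 (fun p : ℝ × ℝ => G (Real.arctan p.1) (p.2/(1+p.1^2))) := by
    rw [← contDiffOn_univ]
    exact hG.comp hψ.contDiffOn (fun p _ => ⟨arctanMemIoo p.1, trivial⟩)
  exact hden.mul hcomp

lemma contDiff_Wf2 (F : ℝ → ℝ) (hF : ContDiffOn ℝ 2 F (Ioo (-(π/2)) (π/2))) :
    ContDiff ℝ 2 (fun q : ℝ × ℝ => Wf F q.1 q.2) := by
  have h1 : ContDiff ℝ 2 (fun q : ℝ × ℝ => (1:ℝ) + (1/2) * (q.2/(1+q.1^2))^2) :=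
    contDiff_const.add (contDiff_const.mul ((contDiff_snd.div contDiff_den den_ne).pow 2))
  exact h1.add ((contDiff_Farctan F hF).comp contDiff_fst)

lemma key_alg (F H : ℝ → ℝ) (G : ℝ → ℝ → ℝ) (z1 z2 v u : ℝ) :
    Pa F z1 z2 * z2 + Pb z1 z2 * (Gf1 F H (z1, z2) + Gf2 G (z1, z2) * (v + u))
      = -(z2/(1+z1^2) * H (z2/(1+z1^2)))
        + (z2/(1+z1^2)) * G (Real.arctan z1) (z2/(1+z1^2)) * (v + u) := by
  have hne : (1 + z1^2) ≠ 0 := (oneaddsq_pos z1).ne'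
  simp only [Pa, Pb, Gf1, Gf2]
  field_simp
  ring

lemma g1f_pair (F H : ℝ → ℝ) (a b : ℝ) : g1f F H (vec2 a b) = Gf1 F H (a, b) := rfl
lemma g1f_pair_add (F H : ℝ → ℝ) (a b : ℝ) (x : EuclideanSpace ℝ (Fin 2)) :
    g1f F H (vec2 a b + x) = Gf1 F H (a + x 0, b + x 1) := rfl
lemma g2f_pair (G : ℝ → ℝ → ℝ) (a b : ℝ) : g2f G (vec2 a b) = Gf2 G (a, b) := rfl
lemma g2f_pair_add (G : ℝ → ℝ → ℝ) (a b : ℝ) (x : EuclideanSpace ℝ (Fin 2)) :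
    g2f G (vec2 a b + x) = Gf2 G (a + x 0, b + x 1) := rfl

set_option maxHeartbeats 2000000 in
theorem stmt_11
    (F H : ℝ → ℝ) (G : ℝ → ℝ → ℝ) (τ : ℝ) (hτ : 0 < τ)
    (hF : ContDiffOn ℝ 2 F (Ioo (-(π / 2)) (π / 2)))
    (hFnn : ∀ q ∈ Ioo (-(π / 2)) (π / 2), 0 ≤ F q)
    (hFtop₁ : Tendsto F (nhdsWithin (π / 2) (Iio (π / 2))) atTop)
    (hFtop₂ : Tendsto F (nhdsWithin (-(π / 2)) (Ioi (-(π / 2)))) atTop)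
    (hH : ContDiff ℝ 1 H) (hHpos : ∀ y : ℝ, 0 ≤ y * H y)
    (hG : ContDiffOn ℝ 1 (fun p : ℝ × ℝ => G p.1 p.2) (Ioo (-(π / 2)) (π / 2) ×ˢ univ))
    (hGpos : ∀ q ∈ Ioo (-(π / 2)) (π / 2), ∀ y : ℝ, 0 < G q y)
    (hGbdd : BddAbove {z : ℝ | ∃ q ∈ Ioo (-(π / 2)) (π / 2), ∃ y : ℝ, z = G q y})
    -- the reference signal
    (q_d qd' qd'' v_d vd' : ℝ → ℝ)
    (hqdmem : ∀ t ≥ (0:ℝ), q_d t ∈ Ioo (-(π / 2)) (π / 2))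
    (hqdD : ∀ t ≥ (0:ℝ), HasDerivAt q_d (qd' t) t ∧ HasDerivAt qd' (qd'' t) t)
    (hvdD : ∀ t ≥ -τ, HasDerivAt v_d (vd' t) t) (hvdc : ContinuousOn vd' (Ici (-τ)))
    (hrefODE : ∀ t ≥ (0:ℝ),
      qd'' t = -(deriv F (q_d t)) - H (qd' t) + G (q_d t) (qd' t) * v_d (t - τ))
    (hbounds : ∃ Λ : ℝ, (∀ t ≥ (0:ℝ), |qd' t| ≤ Λ) ∧ (∀ t ≥ -τ, |v_d t| ≤ Λ) ∧
      (∀ t ≥ -τ, |vd' t| ≤ Λ))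
    (hqdsup : ∃ b < π / 2, ∀ t ≥ (0:ℝ), |q_d t| ≤ b)
    -- ζ_d, f̃, g̃
    (ζ1d ζ2d : ℝ → ℝ)
    (hζ1d : ∀ t, ζ1d t = Real.tan (q_d t))
    (hζ2d : ∀ t, ζ2d t = qd' t / Real.cos (q_d t) ^ 2)
    (ftil gtil : ℝ → EuclideanSpace ℝ (Fin 2) → ℝ)
    (hftil : ∀ t x, ftil t x = g1f F H (vec2 (ζ1d t) (ζ2d t) + x) - g1f F H (vec2 (ζ1d t) (ζ2d t))
      + (g2f G (vec2 (ζ1d t) (ζ2d t) + x) - g2f G (vec2 (ζ1d t) (ζ2d t))) * v_d (t - τ))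
    (hgtil : ∀ t x, gtil t x = g2f G (vec2 (ζ1d t) (ζ2d t) + x))
    -- G̃ and c
    (Gt : ℝ) (hGt : Gt = sSup {z : ℝ | ∃ q ∈ Ioo (-(π / 2)) (π / 2), ∃ y : ℝ, z = G q y})
    (hvdsqbdd : BddAbove ((fun t => v_d t ^ 2) '' Ici (-τ)))
    (c : ℝ) (hc : c = 1 / 2 + Gt ^ 2 * sSup ((fun t => v_d t ^ 2) '' Ici (-τ)))
    -- W
    (W : ℝ → EuclideanSpace ℝ (Fin 2) → ℝ)
    (hWdef : ∀ t x, W t x =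
      1 + (1 / 2) * ((ζ2d t + x 1) / (1 + (ζ1d t + x 0) ^ 2)) ^ 2
        + F (Real.arctan (ζ1d t + x 0))) :
    ContDiffOn ℝ 2 (fun p : ℝ × EuclideanSpace ℝ (Fin 2) => W p.1 p.2) (Ici 0 ×ˢ univ) ∧
    (∀ t ≥ (0:ℝ), ∀ x : EuclideanSpace ℝ (Fin 2), 1 ≤ W t x) ∧
    (∀ t ≥ (0:ℝ), ∀ x : EuclideanSpace ℝ (Fin 2), ∀ u : ℝ,
      derivWithin (fun s => W s x) (Ici 0) t
        + fderiv ℝ (fun y => W t y) x (EuclideanSpace.single 0 1) * x 1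
        + fderiv ℝ (fun y => W t y) x (EuclideanSpace.single 1 1) * (ftil t x + gtil t x * u)
      ≤ c * W t x + Gt ^ 2 * u ^ 2) := by
  have hUD : UniqueDiffOn ℝ (Ici (0:ℝ)) := uniqueDiffOn_Ici 0
  have hcos : ∀ t, t ≥ (0:ℝ) → Real.cos (q_d t) ≠ 0 := fun t ht =>
    (Real.cos_pos_of_mem_Ioo (hqdmem t ht)).ne'
  -- derivative of ζ1d
  have hd1 : ∀ t, t ≥ (0:ℝ) → HasDerivAt ζ1d (ζ2d t) t := by
    intro t ht
    have h := (Real.hasDerivAt_tan (hcos t ht)).comp t (hqdD t ht).1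
    have he : ζ1d = fun s => Real.tan (q_d s) := funext hζ1d
    rw [he, hζ2d t]
    have hv : qd' t / Real.cos (q_d t)^2 = 1 / Real.cos (q_d t)^2 * qd' t := by ring
    rw [hv]
    simpa [Function.comp_def] using h
  -- derivative of ζ2d
  set Z : ℝ → ℝ := fun t => Gf1 F H (ζ1d t, ζ2d t) + Gf2 G (ζ1d t, ζ2d t) * v_d (t - τ)
    with hZdef
  have hd2 : ∀ t, t ≥ (0:ℝ) → HasDerivAt ζ2d (Z t) t := by
    intro t ht
    have hc := hcos t ht
    have hcq : HasDerivAt (fun s => Real.cos (q_d s)) (-Real.sin (q_d t) * qd' t) t := by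
      simpa [Function.comp_def] using (Real.hasDerivAt_cos (q_d t)).comp t (hqdD t ht).1
    have hden : HasDerivAt (fun s => Real.cos (q_d s)^2)
        (2 * Real.cos (q_d t) * (-Real.sin (q_d t) * qd' t)) t := by
      have h2 := hcq.pow 2
      refine h2.congr_deriv ?_
      push_cast
      ring
    have hquot := ((hqdD t ht).2).div hden (pow_ne_zero 2 hc)
    have he : ζ2d = fun s => qd' s / Real.cos (q_d s)^2 := funext hζ2d
    rw [he]
    refine hquot.congr_deriv ?_
    symm
    have h1t : 1 + Real.tan (q_d t)^2 = (Real.cos (q_d t)^2)⁻¹ := by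
      rw [← Real.inv_one_add_tan_sq hc, inv_inv]
    have harg : qd' t / Real.cos (q_d t)^2 / (1 + Real.tan (q_d t)^2) = qd' t := by
      rw [h1t]; field_simp
    simp only [hZdef, Gf1, Gf2, hζ1d, hζ2d]
    rw [Real.arctan_tan (hqdmem t ht).1 (hqdmem t ht).2, harg, hrefODE t ht, h1t,
      Real.tan_eq_sin_div_cos]
    field_simp
    ring
  -- continuity
  have hζ1cont : ContinuousOn ζ1d (Ici 0) := fun t ht =>
    ((hd1 t ht).continuousAt).continuousWithinAt
  have hζ2cont : ContinuousOn ζ2d (Ici 0) := fun t ht =>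
    ((hd2 t ht).continuousAt).continuousWithinAt
  have hvcont : ContinuousOn v_d (Ici (-τ)) := fun t ht =>
    ((hvdD t ht).continuousAt).continuousWithinAt
  have hmapsub : MapsTo (fun t : ℝ => t - τ) (Ici (0:ℝ)) (Ici (-τ)) := by
    intro t ht
    simp only [mem_Ici] at *
    linarith
  have hvsh : ContinuousOn (fun t : ℝ => v_d (t - τ)) (Ici 0) :=
    hvcont.comp ((continuous_id.sub continuous_const).continuousOn) hmapsub
  have hZcont : ContinuousOn Z (Ici 0) := by
    apply ContinuousOn.add
    · exact (contDiff_Gf1 F H hF hH).continuous.comp_continuousOn (hζ1cont.prodMk hζ2cont)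
    · exact ((contDiff_Gf2 G hG).continuous.comp_continuousOn (hζ1cont.prodMk hζ2cont)).mul hvsh
  -- differentiability and derivWithin
  have hζ1diff : DifferentiableOn ℝ ζ1d (Ici 0) := fun t ht =>
    ((hd1 t ht).differentiableAt).differentiableWithinAt
  have hζ2diff : DifferentiableOn ℝ ζ2d (Ici 0) := fun t ht =>
    ((hd2 t ht).differentiableAt).differentiableWithinAt
  have hζ1dW : ∀ t ∈ Ici (0:ℝ), derivWithin ζ1d (Ici 0) t = ζ2d t := fun t ht =>
    ((hd1 t ht).hasDerivWithinAt).derivWithin (hUD t ht)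
  have hζ2dW : ∀ t ∈ Ici (0:ℝ), derivWithin ζ2d (Ici 0) t = Z t := fun t ht =>
    ((hd2 t ht).hasDerivWithinAt).derivWithin (hUD t ht)
  have hnotop : ((1:WithTop ℕ∞) = ⊤ → AnalyticOn ℝ ζ2d (Ici 0)) := by
    intro h; exact absurd h (by decide)
  -- C¹ regularity of ζ1d, ζ2d
  have hζ1C1 : ContDiffOn ℝ 1 ζ1d (Ici 0) := by
    rw [show (1:WithTop ℕ∞) = 0 + 1 from (zero_add 1).symm]
    refine (contDiffOn_succ_iff_derivWithin hUD).2 ⟨hζ1diff, ?_, ?_⟩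
    · intro h; exact absurd h (by decide)
    · rw [contDiffOn_zero]
      exact hζ2cont.congr hζ1dW
  have hζ2C1 : ContDiffOn ℝ 1 ζ2d (Ici 0) := by
    rw [show (1:WithTop ℕ∞) = 0 + 1 from (zero_add 1).symm]
    refine (contDiffOn_succ_iff_derivWithin hUD).2 ⟨hζ2diff, ?_, ?_⟩
    · intro h; exact absurd h (by decide)
    · rw [contDiffOn_zero]
      exact hZcont.congr hζ2dW
  -- C¹ of shifted v_d
  have hvC1 : ContDiffOn ℝ 1 v_d (Ici (-τ)) := by
    rw [show (1:WithTop ℕ∞) = 0 + 1 from (zero_add 1).symm]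
    refine (contDiffOn_succ_iff_derivWithin (uniqueDiffOn_Ici (-τ))).2
      ⟨fun t ht => ((hvdD t ht).differentiableAt).differentiableWithinAt, ?_, ?_⟩
    · intro h; exact absurd h (by decide)
    · rw [contDiffOn_zero]
      exact hvdc.congr fun t ht =>
        ((hvdD t ht).hasDerivWithinAt).derivWithin (uniqueDiffOn_Ici (-τ) t ht)
  have hvshC1 : ContDiffOn ℝ 1 (fun t : ℝ => v_d (t - τ)) (Ici 0) :=
    hvC1.comp ((contDiff_id.sub contDiff_const).contDiffOn) hmapsub
  -- C¹ of Z, then C² of ζ's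
  have hZC1 : ContDiffOn ℝ 1 Z (Ici 0) := by
    apply ContDiffOn.add
    · exact (contDiff_Gf1 F H hF hH).comp_contDiffOn (hζ1C1.prodMk hζ2C1)
    · exact ((contDiff_Gf2 G hG).comp_contDiffOn (hζ1C1.prodMk hζ2C1)).mul hvshC1
  have hζ2C2 : ContDiffOn ℝ 2 ζ2d (Ici 0) := by
    rw [show (2:WithTop ℕ∞) = 1 + 1 from one_add_one_eq_two.symm]
    refine (contDiffOn_succ_iff_derivWithin hUD).2 ⟨hζ2diff, ?_, hZC1.congr hζ2dW⟩
    intro h; exact absurd h (by decide)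
  have hζ1C2 : ContDiffOn ℝ 2 ζ1d (Ici 0) := by
    rw [show (2:WithTop ℕ∞) = 1 + 1 from one_add_one_eq_two.symm]
    refine (contDiffOn_succ_iff_derivWithin hUD).2 ⟨hζ1diff, ?_, hζ2C1.congr hζ1dW⟩
    intro h; exact absurd h (by decide)
  refine ⟨?_, ?_, ?_⟩
  · -- C² of W
    have hWfun : (fun p : ℝ × EuclideanSpace ℝ (Fin 2) => W p.1 p.2)
        = fun p : ℝ × EuclideanSpace ℝ (Fin 2) => Wf F (ζ1d p.1 + p.2 0) (ζ2d p.1 + p.2 1) := by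
      funext p
      rw [hWdef]
      rfl
    rw [hWfun]
    have hfstmap : MapsTo (fun p : ℝ × EuclideanSpace ℝ (Fin 2) => p.1)
        (Ici 0 ×ˢ univ) (Ici (0:ℝ)) := fun p hp => hp.1
    have hproj0 : ContDiff ℝ 2 (fun p : ℝ × EuclideanSpace ℝ (Fin 2) => p.2 0) :=
      ((EuclideanSpace.proj (0 : Fin 2) : EuclideanSpace ℝ (Fin 2) →L[ℝ] ℝ).contDiff).comp
        contDiff_snd
    have hproj1 : ContDiff ℝ 2 (fun p : ℝ × EuclideanSpace ℝ (Fin 2) => p.2 1) :=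
      ((EuclideanSpace.proj (1 : Fin 2) : EuclideanSpace ℝ (Fin 2) →L[ℝ] ℝ).contDiff).comp
        contDiff_snd
    have hin : ContDiffOn ℝ 2
        (fun p : ℝ × EuclideanSpace ℝ (Fin 2) =>
          ((ζ1d p.1 + p.2 0, ζ2d p.1 + p.2 1) : ℝ × ℝ)) (Ici 0 ×ˢ univ) := by
      refine ContDiffOn.prodMk ?_ ?_
      · exact (hζ1C2.comp (contDiff_fst.contDiffOn) hfstmap).add hproj0.contDiffOn
      · exact (hζ2C2.comp (contDiff_fst.contDiffOn) hfstmap).add hproj1.contDiffOn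
    exact (contDiff_Wf2 F hF).comp_contDiffOn hin
  · -- 1 ≤ W
    intro t ht x
    rw [hWdef]
    have h1 := hFnn _ (arctanMemIoo (ζ1d t + x 0))
    nlinarith [sq_nonneg ((ζ2d t + x 1)/(1+(ζ1d t + x 0)^2))]
  · -- dissipation inequality
    intro t ht x u
    have hfun1 : (fun s => W s x) = fun s => Wf F (ζ1d s + x 0) (ζ2d s + x 1) := by
      funext s; rw [hWdef]; rfl
    have hT : derivWithin (fun s => W s x) (Ici 0) t
        = Pa F (ζ1d t + x 0) (ζ2d t + x 1) * ζ2d t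
          + Pb (ζ1d t + x 0) (ζ2d t + x 1) * Z t := by
      rw [hfun1]
      exact ((hasDerivAt_W_time F hF (x 0) (x 1) ζ1d ζ2d (ζ2d t) (Z t) t
        (hd1 t ht) (hd2 t ht)).hasDerivWithinAt).derivWithin (hUD t ht)
    have hfun2 : (fun y => W t y)
        = fun y : EuclideanSpace ℝ (Fin 2) => Wf F (ζ1d t + y 0) (ζ2d t + y 1) := by
      funext y; rw [hWdef]; rfl
    have hSp := (hasFDerivAt_W_space F hF (ζ1d t) (ζ2d t) x).fderiv
    have hX0 : fderiv ℝ (fun y => W t y) x (EuclideanSpace.single 0 1)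
        = Pa F (ζ1d t + x 0) (ζ2d t + x 1) := by
      rw [hfun2, hSp]
      simp only [ContinuousLinearMap.add_apply, ContinuousLinearMap.coe_smul', Pi.smul_apply,
        PiLp.proj_apply, EuclideanSpace.single_apply, smul_eq_mul]
      norm_num
    have hX1 : fderiv ℝ (fun y => W t y) x (EuclideanSpace.single 1 1)
        = Pb (ζ1d t + x 0) (ζ2d t + x 1) := by
      rw [hfun2, hSp]
      simp only [ContinuousLinearMap.add_apply, ContinuousLinearMap.coe_smul', Pi.smul_apply,
        PiLp.proj_apply, EuclideanSpace.single_apply, smul_eq_mul]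
      norm_num
    have hLHS : derivWithin (fun s => W s x) (Ici 0) t
        + fderiv ℝ (fun y => W t y) x (EuclideanSpace.single 0 1) * x 1
        + fderiv ℝ (fun y => W t y) x (EuclideanSpace.single 1 1) * (ftil t x + gtil t x * u)
        = -((ζ2d t + x 1)/(1+(ζ1d t + x 0)^2) * H ((ζ2d t + x 1)/(1+(ζ1d t + x 0)^2)))
          + ((ζ2d t + x 1)/(1+(ζ1d t + x 0)^2))
            * G (Real.arctan (ζ1d t + x 0)) ((ζ2d t + x 1)/(1+(ζ1d t + x 0)^2))
            * (v_d (t - τ) + u) := by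
      rw [hT, hX0, hX1, hftil, hgtil, g1f_pair, g1f_pair_add, g2f_pair, g2f_pair_add,
        ← key_alg F H G (ζ1d t + x 0) (ζ2d t + x 1) (v_d (t - τ)) u]
      simp only [hZdef]
      ring
    rw [hLHS]
    set η : ℝ := (ζ2d t + x 1)/(1+(ζ1d t + x 0)^2) with hη
    set g : ℝ := G (Real.arctan (ζ1d t + x 0)) η with hg
    set v : ℝ := v_d (t - τ) with hv
    set Sv : ℝ := sSup ((fun t => v_d t ^ 2) '' Ici (-τ)) with hSv
    have hWv := hWdef t x
    rw [← hη] at hWv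
    have hmem := arctanMemIoo (ζ1d t + x 0)
    have hFa : 0 ≤ F (Real.arctan (ζ1d t + x 0)) := hFnn _ hmem
    have hHp : 0 ≤ η * H η := hHpos η
    have hgpos : 0 < g := hGpos _ hmem η
    have hgle : g ≤ Gt := by
      rw [hGt]
      exact le_csSup hGbdd ⟨_, hmem, η, rfl⟩
    have hGt0 : 0 < Gt := lt_of_lt_of_le hgpos hgle
    have hvS : v ^ 2 ≤ Sv := by
      rw [hv, hSv]
      exact le_csSup hvdsqbdd ⟨t - τ, by simp only [mem_Ici]; linarith, rfl⟩
    have hSv0 : 0 ≤ Sv := le_trans (sq_nonneg v) hvS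
    have hg2 : g^2 ≤ Gt^2 := by nlinarith
    have h1a : g^2 * v^2 ≤ Gt^2 * Sv := by
      have e1 : g^2 * v^2 ≤ Gt^2 * v^2 := mul_le_mul_of_nonneg_right hg2 (sq_nonneg v)
      have e2 : Gt^2 * v^2 ≤ Gt^2 * Sv := mul_le_mul_of_nonneg_left hvS (sq_nonneg Gt)
      linarith
    have h1 : η * g * v ≤ (1/2)*(η^2*(Gt^2*Sv)) + 1/2 := by
      nlinarith [sq_nonneg (η*g*v - 1), mul_le_mul_of_nonneg_left h1a (sq_nonneg η)]
    have h2 : η * g * u ≤ (1/4)*η^2 + Gt^2*u^2 := by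
      nlinarith [sq_nonneg (η - 2*(g*u)), mul_le_mul_of_nonneg_right hg2 (sq_nonneg u)]
    rw [hWv, hc]
    nlinarith [hHp, h1, h2, hFa, hSv0, mul_nonneg (mul_nonneg (sq_nonneg Gt) hSv0) hFa,
      mul_nonneg (mul_nonneg (sq_nonneg Gt) hSv0) (sq_nonneg η),
      mul_nonneg (sq_nonneg Gt) hSv0]
end
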